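/- arXiv:1702.08119 — 6 statements merged into one kernel-verified Lean document; each statement's English description precedes it below -/
import Mathlib

section
/- Let T be a simple broad poset (a commutative broad poset such that whenever e_1 ⋯ e_n ≤ e, the e_i are pairwise distinct). Then the descendant relation ≤_d on T, defined by f ≤_d e iff f appears in some tuple f̲ with f̲ ≤ e, is a partial order relation on T. -/
universe u

namespace BroadPaper

/-- A broad relation on `X`: a relation between finite unordered tuples
(multisets) over `X` and elements of `X`. -/
abbrev Rel (X : Type u) : Type u := Multiset X → X → Prop

variable {X : Type u} {Y : Type u} {A : Type u} {B : Type u} {Z : Type u}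

/-- Broad transitivity: if `f₁ ⋯ fₙ ≤ e` and `g̲ᵢ ≤ fᵢ` then `g̲₁ ⋯ g̲ₙ ≤ e`,
encoded via a multiset of pairs `(g̲ᵢ, fᵢ)`. -/
def BTrans (r : Rel X) : Prop :=
  ∀ (p : Multiset (Multiset X × X)) (e : X),
    r (p.map Prod.snd) e → (∀ q ∈ p, r q.1 q.2) → r ((p.map Prod.fst).sum) e

/-- A pre-broad poset: reflexivity plus broad transitivity. -/
def IsPreBroad (r : Rel X) : Prop := (∀ e : X, r {e} e) ∧ BTrans r

/-- A (commutative) broad poset: a pre-broad poset satisfying antisymmetry. -/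
def IsBroad (r : Rel X) : Prop :=
  IsPreBroad r ∧ ∀ e f : X, r {e} f → r {f} e → e = f

/-- Simplicity: letters in any broad relation are pairwise distinct. -/
def Simple (r : Rel X) : Prop := ∀ fs e, r fs e → fs.Nodup

/-- The descendant relation `f ≤_d e`. -/
def descends (r : Rel X) (f e : X) : Prop := ∃ fs, r fs e ∧ f ∈ fs

def Comparable (r : Rel X) (f g : X) : Prop := descends r f g ∨ descends r g f

def Incomp (r : Rel X) (f g : X) : Prop := ¬ descends r f g ∧ ¬ descends r g f

/-- Blockwise extension of a broad relation to a relation between tuples: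
`fs ≤ es` iff `fs = f̲₁ ⋯ f̲ₖ`, `es = e₁ ⋯ eₖ` with `f̲ᵢ ≤ eᵢ`. -/
def tupleLE (r : Rel X) (fs es : Multiset X) : Prop :=
  ∃ p : Multiset (Multiset X × X),
    p.map Prod.snd = es ∧ (p.map Prod.fst).sum = fs ∧ ∀ q ∈ p, r q.1 q.2

/-- A leaf: no tuple strictly below `e`. -/
def IsLeaf (r : Rel X) (e : X) : Prop := ¬ ∃ fs, r fs e ∧ fs ≠ ({e} : Multiset X)

/-- `fs` is the maximum tuple strictly below `e` (written `e^↑`).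
If `fs ≠ 0`, `e` is a node; if `fs = 0`, `e` is a stump. -/
def upTuple (r : Rel X) (e : X) (fs : Multiset X) : Prop :=
  (r fs e ∧ fs ≠ ({e} : Multiset X)) ∧
    ∀ gs, r gs e → gs ≠ ({e} : Multiset X) → tupleLE r gs fs

def IsStump (r : Rel X) (e : X) : Prop := upTuple r e 0

/-- A dendroidally ordered set (tree): a finite simple broad poset in which
every element is a leaf, node or stump, with a `≤_d`-maximum (root). -/
def IsTree (r : Rel X) : Prop :=
  IsBroad r ∧ Finite X ∧ Simple r ∧
    (∀ e : X, IsLeaf r e ∨ ∃ fs, upTuple r e fs) ∧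
    ∃ rt : X, ∀ e, descends r e rt

def IsMaxEl (r : Rel X) (e : X) : Prop := ∀ s, descends r e s → s = e

/-- A forestially ordered set (forest): each element has a unique
`≤_d`-maximal element above it. -/
def IsForest (r : Rel X) : Prop :=
  IsBroad r ∧ Finite X ∧ Simple r ∧
    (∀ e : X, IsLeaf r e ∨ ∃ fs, upTuple r e fs) ∧
    ∀ e : X, ∃! rt : X, IsMaxEl r rt ∧ descends r e rt

/-- A map of broad posets: preserves broad relations (letterwise on tuples). -/
def BroadHom (r : Rel X) (r' : Rel Y) (φ : X → Y) : Prop :=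
  ∀ fs e, r fs e → r' (fs.map φ) (φ e)

/-- `rs` is the root tuple: the tuple of `≤_d`-maximal elements (no repeats). -/
def IsRootTuple (r : Rel X) (rs : Multiset X) : Prop :=
  rs.Nodup ∧ ∀ x, x ∈ rs ↔ IsMaxEl r x

/-- Independent map of forests: `φ(r̲_F)·e̲ ≤ r̲_{F'}` for some tuple `e̲`. -/
def Independent (r : Rel X) (r' : Rel Y) (φ : X → Y) : Prop :=
  ∃ (rs : Multiset X) (rs' : Multiset Y) (es : Multiset Y),
    IsRootTuple r rs ∧ IsRootTuple r' rs' ∧ tupleLE r' (rs.map φ + es) rs'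

/-- The (pre-)broad relation generated by a set of generating relations:
closure under reflexivity and broad transitivity. -/
inductive GenRel (gen : Rel X) : Rel X
  | of : ∀ fs e, gen fs e → GenRel gen fs e
  | refl : ∀ e, GenRel gen {e} e
  | btrans : ∀ (p : Multiset (Multiset X × X)) (e : X),
      GenRel gen (p.map Prod.snd) e → (∀ q ∈ p, GenRel gen q.1 q.2) →
      GenRel gen ((p.map Prod.fst).sum) e

/-- Generators of the tensor product `S ⊗ T`: relations `s̲ × t ≤ (s,t)` and
`s × t̲ ≤ (s,t)`. -/
def tensorGen (rS : Rel A) (rT : Rel B) : Rel (A × B) := fun xs x =>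
  (∃ as, rS as x.1 ∧ xs = as.map fun a => (a, x.2)) ∨
  (∃ bs, rT bs x.2 ∧ xs = bs.map fun b => (x.1, b))

/-- The tensor product broad relation on `A × B`. -/
def tensorRel (rS : Rel A) (rT : Rel B) : Rel (A × B) := GenRel (tensorGen rS rT)

/-- Product of tuples: all pairs from `as` and `bs`. -/
def mprod (as : Multiset A) (bs : Multiset B) : Multiset (A × B) :=
  as.bind fun a => bs.map fun b => (a, b)

end BroadPaper

namespace BroadPaper

/-- Substitution: if `r fs e`, `f ∈ fs` and `r gs f`, then
`r (gs + fs.erase f) e`. -/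
theorem subst_lemma {X : Type u} [DecidableEq X] {r : Rel X} (hb : IsBroad r)
    {fs gs : Multiset X} {e f : X} (hfe : r fs e) (hf : f ∈ fs)
    (hgf : r gs f) : r (gs + fs.erase f) e := by
  classical
  obtain ⟨⟨hrefl, htrans⟩, _⟩ := hb
  set p : Multiset (Multiset X × X) :=
    (gs, f) ::ₘ (fs.erase f).map (fun x => (({x} : Multiset X), x)) with hp
  have hsnd : p.map Prod.snd = fs := by
    simp only [hp, Multiset.map_cons, Multiset.map_map]
    simp [Multiset.cons_erase hf]
  have hfst : (p.map Prod.fst).sum = gs + fs.erase f := by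
    simp only [hp, Multiset.map_cons, Multiset.map_map, Multiset.sum_cons]
    simp [Multiset.sum_map_singleton]
  have := htrans p e (hsnd ▸ hfe) (by
    intro q hq
    rw [hp, Multiset.mem_cons] at hq
    rcases hq with rfl | hq
    · exact hgf
    · obtain ⟨x, _, rfl⟩ := Multiset.mem_map.mp hq
      exact hrefl x)
  rwa [hfst] at this

/-- If `r hs e` and `e ∈ hs` then `hs = {e}`. -/
theorem mem_self_singleton {X : Type u} [DecidableEq X] {r : Rel X} (hb : IsBroad r)
    (hs : Simple r) {es : Multiset X} {e : X} (h : r es e) (he : e ∈ es) :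
    es = ({e} : Multiset X) := by
  classical
  have h2 : r (es + es.erase e) e := subst_lemma hb h he h
  have hnd := hs _ _ h2
  have ht : es.erase e = 0 := by
    by_contra h0
    obtain ⟨x, hx⟩ := Multiset.exists_mem_of_ne_zero h0
    have hx1 : x ∈ es := Multiset.mem_of_mem_erase hx
    have : 2 ≤ Multiset.count x (es + es.erase e) := by
      rw [Multiset.count_add]
      have := Multiset.one_le_count_iff_mem.mpr hx1
      have := Multiset.one_le_count_iff_mem.mpr hx
      omega
    have := Multiset.nodup_iff_count_le_one.mp hnd x
    omega
  have := Multiset.cons_erase he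
  rw [ht] at this
  simpa using this.symm

/-- For a simple broad poset, the descendant relation `≤_d`
is a partial order. -/
theorem stmt0 {X : Type u} (r : Rel X) (hb : IsBroad r) (hs : Simple r) :
    IsPartialOrder X (descends r) := by
  classical
  obtain ⟨⟨hrefl, htrans⟩, hanti⟩ := hb
  refine { refl := ?_, trans := ?_, antisymm := ?_ }
  · intro e; exact ⟨{e}, hrefl e, Multiset.mem_singleton_self e⟩
  · rintro a b c ⟨fs, hfs, haf⟩ ⟨gs, hgs, hbg⟩
    have := subst_lemma ⟨⟨hrefl, htrans⟩, hanti⟩ hgs hbg hfs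
    exact ⟨fs + gs.erase b, this, Multiset.mem_add.mpr (Or.inl haf)⟩
  · rintro a b ⟨fs, hfs, haf⟩ ⟨gs, hgs, hbg⟩
    -- r fs b with a ∈ fs; r gs a with b ∈ gs
    have hb' : IsBroad r := ⟨⟨hrefl, htrans⟩, hanti⟩
    have h2 : r (gs + fs.erase a) b := subst_lemma hb' hfs haf hgs
    have heq : gs + fs.erase a = ({b} : Multiset X) :=
      mem_self_singleton hb' hs h2 (Multiset.mem_add.mpr (Or.inl hbg))
    have hgsb : gs = ({b} : Multiset X) := by
      have hle : gs ≤ gs + fs.erase a := Multiset.le_add_right _ _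
      rw [heq] at hle
      rcases Multiset.le_singleton.mp hle with h0 | h1
      · rw [h0] at hbg; simp at hbg
      · exact h1
    have hfa : fs.erase a = 0 := by
      have : Multiset.card (gs + fs.erase a) = 1 := by rw [heq]; simp
      rw [Multiset.card_add, hgsb] at this
      simpa using this
    have hfsa : fs = ({a} : Multiset X) := by
      have := Multiset.cons_erase haf
      rw [hfa] at this
      simpa using this.symm
    rw [hgsb] at hgs
    rw [hfsa] at hfs
    exact hanti a b hfs hgs

end BroadPaper
end

section
/- Let T be a simple broad poset. If f_1 ⋯ f_k ≤ e is a broad relation, then the elements f_i are pairwise ≤_d-incomparable; in particular, a relation of the form e·f̲ ≤ e can hold only if f̲ = ε. -/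
universe u

namespace BroadPaper

/-- Key lemma: if `fs ≤ e`, `f, g ∈ fs` with `g ≠ f`, then `g` does not
descend from `f`. -/
lemma key_incomp {X : Type u} (r : Rel X) (hb : IsBroad r) (hs : Simple r)
    {fs : Multiset X} {e f g : X} (h : r fs e) (hf : f ∈ fs) (hg : g ∈ fs)
    (hne : g ≠ f) : ¬ descends r g f := by
  classical
  rintro ⟨gs, hgs, hgmem⟩
  set rest := fs.erase f with hrest
  have hgrest : g ∈ rest := (Multiset.mem_erase_of_ne hne).mpr hg
  set p : Multiset (Multiset X × X) := (gs, f) ::ₘ rest.map (fun x => ({x}, x))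
    with hp
  have hsnd : p.map Prod.snd = fs := by
    simp [hp, Multiset.map_map, Function.comp, Multiset.cons_erase hf, hrest]
  have hall : ∀ q ∈ p, r q.1 q.2 := by
    intro q hq
    rw [hp, Multiset.mem_cons] at hq
    rcases hq with rfl | hq
    · exact hgs
    · obtain ⟨x, hx, rfl⟩ := Multiset.mem_map.mp hq
      exact hb.1.1 x
  have htr := hb.1.2 p e (by rw [hsnd]; exact h) hall
  have hfst : (p.map Prod.fst).sum = gs + rest := by
    simp [hp, Multiset.map_map, Function.comp]
  rw [hfst] at htr
  have hn := hs _ _ htr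
  rw [Multiset.nodup_add] at hn
  exact Multiset.disjoint_left.mp hn.2.2 hgmem hgrest

/-- In a simple broad poset, the letters of any broad relation
`f₁ ⋯ fₖ ≤ e` are pairwise `≤_d`-incomparable; in particular `e·f̲ ≤ e`
forces `f̲ = ε`. -/
theorem stmt1 {X : Type u} (r : Rel X) (hb : IsBroad r) (hs : Simple r) :
    (∀ (fs : Multiset X) (e : X), r fs e → fs.Pairwise (Incomp r)) ∧
    (∀ (e : X) (fs : Multiset X), r (e ::ₘ fs) e → fs = 0) := by
  constructor
  · intro fs e h
    obtain ⟨l, rfl⟩ := Quotient.exists_rep fs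
    refine ⟨l, rfl, ?_⟩
    have hnd : l.Nodup := Multiset.coe_nodup.mp (hs _ _ h)
    refine hnd.imp_of_mem (fun {a b} ha hb' hab => ?_)
    exact ⟨key_incomp r hb hs h (Multiset.mem_coe.mpr hb') (Multiset.mem_coe.mpr ha) hab,
      key_incomp r hb hs h (Multiset.mem_coe.mpr ha) (Multiset.mem_coe.mpr hb')
        (Ne.symm hab)⟩
  · intro e fs h
    by_contra hne
    obtain ⟨f, hf⟩ := Multiset.exists_mem_of_ne_zero hne
    have hfe : f ≠ e := by
      rintro rfl
      exact (Multiset.nodup_cons.mp (hs _ _ h)).1 hf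
    exact key_incomp r hb hs h (Multiset.mem_cons_self e fs)
      (Multiset.mem_cons_of_mem hf) hfe ⟨_, h, Multiset.mem_cons_of_mem hf⟩

end BroadPaper
end

section
/- Let T be a simple broad poset and define, for tuples f̲, e̲ ∈ T⁺, f̲ ≤ e̲ iff one can write f̲ = f̲_1⋯f̲_k and e̲ = e_1⋯e_k with f̲_i ≤ e_i for all i. Then this relation ≤ on T⁺ is a partial order (in particular antisymmetric). -/
universe u

namespace BroadPaper

set_option linter.unusedSectionVars false

section Aux
variable {X : Type u} [DecidableEq X] {r : Rel X}


theorem subst_one (hbt : BTrans r) (hrefl : ∀ e, r {e} e)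
    {as bs : Multiset X} {e g : X} (hg : g ∈ as) (h1 : r as e) (h2 : r bs g) :
    r (bs + as.erase g) e := by
  classical
  have := hbt ((bs, g) ::ₘ (as.erase g).map (fun x => ({x}, x))) e ?_ ?_
  · simpa [Multiset.sum_map_singleton, Function.comp_def] using this
  · simpa [Function.comp_def, Multiset.cons_erase hg] using h1
  · rintro q hq
    rcases Multiset.mem_cons.1 hq with h | h
    · subst h; exact h2
    · rcases Multiset.mem_map.1 h with ⟨x, _, rfl⟩; exact hrefl x

theorem eq_singleton_of_mem (hbt : BTrans r) (hrefl : ∀ e, r {e} e) (hs : Simple r)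
    {gs : Multiset X} {e : X} (h : r gs e) (he : e ∈ gs) : gs = {e} := by
  classical
  have h2 := subst_one hbt hrefl he h h
  by_cases h0 : gs.erase e = 0
  · rw [← Multiset.cons_erase he, h0]; rfl
  · rcases Multiset.exists_mem_of_ne_zero h0 with ⟨x, hx⟩
    have hxg : x ∈ gs := Multiset.mem_of_mem_erase hx
    have hn := hs _ _ h2
    have hc : 2 ≤ Multiset.count x (gs + gs.erase e) := by
      rw [Multiset.count_add]
      have := Multiset.one_le_count_iff_mem.2 hxg
      have := Multiset.one_le_count_iff_mem.2 hx
      omega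
    have := Multiset.nodup_iff_count_le_one.1 hn x
    omega

theorem descends_trans (hbt : BTrans r) (hrefl : ∀ e, r {e} e)
    {f g h : X} (h1 : descends r f g) (h2 : descends r g h) : descends r f h := by
  rcases h1 with ⟨bs, hbs, hf⟩
  rcases h2 with ⟨as, has, hg⟩
  exact ⟨bs + as.erase g, subst_one hbt hrefl hg has hbs,
    Multiset.mem_add.2 (Or.inl hf)⟩

theorem descends_antisymm (hbt : BTrans r) (hrefl : ∀ e, r {e} e) (hs : Simple r)
    (hanti : ∀ e f : X, r {e} f → r {f} e → e = f)
    {e f : X} (h1 : descends r f e) (h2 : descends r e f) : e = f := by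
  rcases h1 with ⟨as, has, hf⟩
  rcases h2 with ⟨bs, hbs, he⟩
  have h3 : r (bs + as.erase f) e := subst_one hbt hrefl hf has hbs
  have h4 : bs + as.erase f = {e} :=
    eq_singleton_of_mem hbt hrefl hs h3 (Multiset.mem_add.2 (Or.inl he))
  have hbse : bs = {e} ∧ as.erase f = 0 := by
    have hcard : Multiset.card bs + Multiset.card (as.erase f) = 1 := by
      have := congrArg Multiset.card h4; simpa using this
    have h1' : 1 ≤ Multiset.card bs := Multiset.card_pos.2 (fun hz => by simp [hz] at he)
    have h0 : as.erase f = 0 := by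
      rw [← Multiset.card_eq_zero]; omega
    refine ⟨?_, h0⟩
    rw [h0, add_zero] at h4; exact h4
  have hasf : as = {f} := by
    have := Multiset.cons_erase hf
    rw [hbse.2] at this; rw [← this]; rfl
  exact hanti e f (hbse.1 ▸ hbs) (hasf ▸ has)

theorem map_split {α β : Type u} {f : α → β} (a : Multiset β) :
    ∀ {s : Multiset α} {b : Multiset β}, s.map f = a + b →
    ∃ s₁ s₂, s = s₁ + s₂ ∧ s₁.map f = a ∧ s₂.map f = b := by
  induction a using Multiset.induction with
  | empty => intro s b h; exact ⟨0, s, by simp, by simp, by simpa using h⟩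
  | cons x a ih =>
    intro s b h
    have hx : x ∈ s.map f := by rw [h]; simp
    rcases Multiset.mem_map.1 hx with ⟨y, hy, hfy⟩
    rcases Multiset.exists_cons_of_mem hy with ⟨s', rfl⟩
    have h' : s'.map f = a + b := by
      have : x ::ₘ s'.map f = x ::ₘ (a + b) := by
        simpa [hfy] using h
      exact (Multiset.cons_inj_right x).1 this
    rcases ih h' with ⟨s₁, s₂, rfl, h1, h2⟩
    exact ⟨y ::ₘ s₁, s₂, by simp [Multiset.cons_add], by simp [hfy, h1], h2⟩

theorem tupleLE_refl (hrefl : ∀ e, r {e} e) (fs : Multiset X) : tupleLE r fs fs := by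
  refine ⟨fs.map fun e => ({e}, e), ?_, ?_, ?_⟩
  · simp [Function.comp_def]
  · simp [Function.comp_def, Multiset.sum_map_singleton]
  · rintro q hq; rcases Multiset.mem_map.1 hq with ⟨x, _, rfl⟩; exact hrefl x

theorem tupleLE_trans (hbt : BTrans r) :
    ∀ (q : Multiset (Multiset X × X)) (fs : Multiset X),
      (∀ x ∈ q, r x.1 x.2) → tupleLE r fs ((q.map Prod.fst).sum) →
      tupleLE r fs (q.map Prod.snd) := by
  intro q
  induction q using Multiset.induction with
  | empty =>
    intro fs _ h
    rcases h with ⟨p, hsnd, hsum, _⟩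
    simp only [Multiset.map_zero, Multiset.sum_zero] at hsnd ⊢
    have : p = 0 := by simpa using hsnd
    subst this
    simp only [Multiset.map_zero, Multiset.sum_zero] at hsum
    exact ⟨0, by simp, by simp [← hsum], by simp⟩
  | cons ce q ih =>
    intro fs hq h
    rcases h with ⟨p, hsnd, hsum, hp⟩
    rw [Multiset.map_cons, Multiset.sum_cons] at hsnd
    rcases map_split ce.1 hsnd with ⟨p₁, p₂, rfl, hp₁, hp₂⟩
    have hre : r ((p₁.map Prod.fst).sum) ce.2 := by
      apply hbt p₁ ce.2 (hp₁ ▸ hq ce (Multiset.mem_cons_self ce q))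
      intro x hx; exact hp x (Multiset.mem_add.2 (Or.inl hx))
    have ih' := ih ((p₂.map Prod.fst).sum)
      (fun x hx => hq x (Multiset.mem_cons_of_mem hx))
      ⟨p₂, hp₂, rfl, fun x hx => hp x (Multiset.mem_add.2 (Or.inr hx))⟩
    rcases ih' with ⟨w, hwsnd, hwsum, hw⟩
    refine ⟨((p₁.map Prod.fst).sum, ce.2) ::ₘ w, by simp [hwsnd], ?_, ?_⟩
    · rw [Multiset.map_cons, Multiset.sum_cons, hwsum, ← hsum]
      simp
    · rintro x hx
      rcases Multiset.mem_cons.1 hx with h | h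
      · subst h; exact hre
      · exact hw x h

theorem exists_max (le : X → X → Prop)
    (htr : ∀ a b c, le a b → le b c → le a c)
    (hanti : ∀ a b, le a b → le b a → a = b) :
    ∀ {T : Multiset X}, T ≠ 0 → ∃ m ∈ T, ∀ x ∈ T, le m x → x = m := by
  intro T
  induction T using Multiset.induction with
  | empty => intro h; exact absurd rfl h
  | cons a T ih =>
    intro _
    by_cases hT : T = 0
    · subst hT
      exact ⟨a, Multiset.mem_cons_self a 0, by
        intro x hx _; simpa using hx⟩
    · rcases ih hT with ⟨m, hm, hmax⟩
      by_cases hle : le m a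
      · refine ⟨a, Multiset.mem_cons_self a T, ?_⟩
        intro x hx hax
        rcases Multiset.mem_cons.1 hx with h | h
        · exact h
        · have hx' : x = m := hmax x h (htr m a x hle hax)
          subst hx'
          exact hanti x a hle hax
      · refine ⟨m, Multiset.mem_cons_of_mem hm, ?_⟩
        intro x hx hmx
        rcases Multiset.mem_cons.1 hx with h | h
        · exact absurd (h ▸ hmx) hle
        · exact hmax x h hmx

theorem count_lemma (m : X) :
    ∀ (w : Multiset (Multiset X × X)),
      (∀ x ∈ w, x.1 ≠ {x.2} → m ∉ x.1) →
      Multiset.count m (w.map Prod.snd) =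
        Multiset.count m ((w.map Prod.fst).sum) +
          Multiset.card (w.filter fun x => x.1 ≠ {x.2} ∧ x.2 = m) := by
  intro w
  induction w using Multiset.induction with
  | empty => intro _; simp
  | cons x w ih =>
    intro hw
    have ih' := ih (fun y hy => hw y (Multiset.mem_cons_of_mem hy))
    rw [Multiset.map_cons, Multiset.map_cons, Multiset.sum_cons,
      Multiset.count_cons, Multiset.count_add, Multiset.filter_cons,
      Multiset.card_add, ih']
    by_cases h1 : x.1 = {x.2}
    · rw [h1, Multiset.count_singleton]
      simp only [h1, ne_eq, not_true_eq_false, false_and, if_false,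
        Multiset.card_zero]
      omega
    · rw [Multiset.count_eq_zero.2 (hw x (Multiset.mem_cons_self x w) h1)]
      simp only [ne_eq, h1, not_false_eq_true, true_and]
      by_cases h2 : x.2 = m
      · simp [h2]; omega
      · simp [h2]; exact fun h : m = x.2 => h2 h.symm

theorem singleton_sum (w : Multiset (Multiset X × X)) (hw : ∀ x ∈ w, x.1 = {x.2}) :
    (w.map Prod.fst).sum = w.map Prod.snd := by
  have h1 : w.map Prod.fst = (w.map Prod.snd).map (fun a => ({a} : Multiset X)) := by
    rw [Multiset.map_map]
    exact Multiset.map_congr rfl (fun x hx => hw x hx)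
  rw [h1, Multiset.sum_map_singleton]

theorem tupleLE_antisymm (hbt : BTrans r) (hrefl : ∀ e, r {e} e) (hs : Simple r)
    (hanti : ∀ e f : X, r {e} f → r {f} e → e = f)
    {fs es : Multiset X} (h1 : tupleLE r fs es) (h2 : tupleLE r es fs) : fs = es := by
  rcases h1 with ⟨p, hpsnd, hpsum, hp⟩
  rcases h2 with ⟨q, hqsnd, hqsum, hq⟩
  have hW : ∀ x ∈ p + q, r x.1 x.2 := by
    intro x hx
    rcases Multiset.mem_add.1 hx with h | h
    · exact hp x h
    · exact hq x h
  set T := ((p + q).filter fun x => x.1 ≠ {x.2}).map Prod.snd with hTdef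
  by_cases hT : T = 0
  · have hfil : ∀ x ∈ p + q, x.1 = {x.2} := by
      intro x hx
      by_contra hne
      have : x ∈ (p + q).filter fun x => x.1 ≠ {x.2} := Multiset.mem_filter.2 ⟨hx, hne⟩
      have : x.2 ∈ T := Multiset.mem_map_of_mem _ this
      rw [hT] at this
      simp at this
    rw [← hpsum, ← hpsnd]
    exact singleton_sum p (fun x hx => hfil x (Multiset.mem_add.2 (Or.inl hx)))
  · obtain ⟨m, hmT, hmax⟩ := exists_max (descends r)
      (fun a b c => descends_trans hbt hrefl)
      (fun a b hab hba => (descends_antisymm hbt hrefl hs hanti hab hba).symm) hT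
    have hnot : ∀ x ∈ p + q, x.1 ≠ {x.2} → m ∉ x.1 := by
      intro x hx hne hm
      have hd : descends r m x.2 := ⟨x.1, hW x hx, hm⟩
      have hmne : m ≠ x.2 := by
        rintro rfl
        exact hne (eq_singleton_of_mem hbt hrefl hs (hW x hx) hm)
      have hx2T : x.2 ∈ T := Multiset.mem_map_of_mem _ (Multiset.mem_filter.2 ⟨hx, hne⟩)
      exact hmne (hmax x.2 hx2T hd).symm
    have cp := count_lemma m p (fun x hx => hnot x (Multiset.mem_add.2 (Or.inl hx)))
    have cq := count_lemma m q (fun x hx => hnot x (Multiset.mem_add.2 (Or.inr hx)))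
    rw [hpsnd, hpsum] at cp
    rw [hqsnd, hqsum] at cq
    rcases Multiset.mem_map.1 hmT with ⟨x, hxf, hx2⟩
    have hxm := Multiset.mem_filter.1 hxf
    rcases Multiset.mem_add.1 hxm.1 with hxp | hxq
    · have hx' : x ∈ p.filter (fun x => x.1 ≠ {x.2} ∧ x.2 = m) :=
        Multiset.mem_filter.2 ⟨hxp, hxm.2, hx2⟩
      have hcard : 1 ≤ Multiset.card (p.filter (fun x => x.1 ≠ {x.2} ∧ x.2 = m)) :=
        Multiset.card_pos.2 (fun hz => by simp [hz] at hx')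
      omega
    · have hx' : x ∈ q.filter (fun x => x.1 ≠ {x.2} ∧ x.2 = m) :=
        Multiset.mem_filter.2 ⟨hxq, hxm.2, hx2⟩
      have hcard : 1 ≤ Multiset.card (q.filter (fun x => x.1 ≠ {x.2} ∧ x.2 = m)) :=
        Multiset.card_pos.2 (fun hz => by simp [hz] at hx')
      omega

end Aux

/-- For a simple broad poset, the blockwise extension of `≤`
to tuples is a partial order on `T⁺`. -/
theorem stmt2 {X : Type u} (r : Rel X) (hb : IsBroad r) (hs : Simple r) :
    IsPartialOrder (Multiset X) (tupleLE r) := by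
  classical
  obtain ⟨⟨hrefl, hbt⟩, hanti⟩ := hb
  exact
    { refl := tupleLE_refl hrefl
      trans := by
        intro a b c h1 h2
        rcases h2 with ⟨q, hsnd, hsum, hq⟩
        exact hsnd ▸ tupleLE_trans hbt q a hq (hsum ▸ h1)
      antisymm := fun a b h1 h2 => tupleLE_antisymm hbt hrefl hs hanti h1 h2 }

end BroadPaper
end

section
/- Let T be a tree (dendroidally ordered set) and A any broad poset. A set map φ: T → A is a map of broad posets (i.e. preserves broad relations) if and only if φ(e^↑) ≤ φ(e) for each node or stump e ∈ T, where e^↑ is the maximal tuple strictly below e. Consequently, the broad relations of T are generated under broad transitivity and reflexivity by the relations e^↑ ≤ e. -/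
universe u

namespace BroadPaper

section Aux3

variable {X : Type u}

/-- Substitution: replace one letter `f` of `us ≤ e` by a tuple `gs ≤ f`. -/
lemma subst_one3 [DecidableEq X] {r : Rel X} (hrefl : ∀ e : X, r {e} e) (hbt : BTrans r)
    {us gs : Multiset X} {e f : X} (hus : r us e) (hf : f ∈ us) (hgs : r gs f) :
    r (gs + us.erase f) e := by
  classical
  set p : Multiset (Multiset X × X) :=
    (gs, f) ::ₘ (us.erase f).map (fun x => ({x}, x)) with hp
  have h1 : p.map Prod.snd = us := by
    simp only [hp, Multiset.map_cons, Multiset.map_map, Function.comp]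
    rw [Multiset.map_id']
    exact Multiset.cons_erase hf
  have h2 : (p.map Prod.fst).sum = gs + us.erase f := by
    simp only [hp, Multiset.map_cons, Multiset.map_map, Function.comp,
      Multiset.sum_cons]
    rw [Multiset.sum_map_singleton]
  have h3 : ∀ q ∈ p, r q.1 q.2 := by
    intro q hq
    rcases Multiset.mem_cons.1 hq with h | h
    · subst h; exact hgs
    · obtain ⟨x, -, rfl⟩ := Multiset.mem_map.1 h
      exact hrefl x
  have := hbt p e (by rwa [h1]) h3
  rwa [h2] at this

lemma mem_rel_singleton3 {r : Rel X} (hrefl : ∀ e : X, r {e} e) (hbt : BTrans r)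
    (hsimp : Simple r) {fs : Multiset X} {e : X} (hr : r fs e) (he : e ∈ fs) :
    fs = {e} := by
  classical
  have h := subst_one3 hrefl hbt hr he hr
  have hnd := hsimp _ _ h
  have h0 : fs.erase e = 0 := by
    by_contra h0
    obtain ⟨x, hx⟩ := Multiset.exists_mem_of_ne_zero h0
    have hxfs : x ∈ fs := Multiset.mem_of_mem_erase hx
    have : 2 ≤ (fs + fs.erase e).count x := by
      rw [Multiset.count_add]
      have h1 : 1 ≤ fs.count x := Multiset.one_le_count_iff_mem.2 hxfs
      have h2 : 1 ≤ (fs.erase e).count x := Multiset.one_le_count_iff_mem.2 hx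
      omega
    have := (Multiset.nodup_iff_count_le_one.1 hnd) x
    omega
  have := Multiset.cons_erase he
  rw [h0] at this
  exact this.symm

lemma descends_trans3 [DecidableEq X] {r : Rel X} (hrefl : ∀ e : X, r {e} e) (hbt : BTrans r)
    {g f e : X} (h1 : descends r g f) (h2 : descends r f e) : descends r g e := by
  obtain ⟨gs, hgs, hg⟩ := h1
  obtain ⟨us, hus, hf⟩ := h2
  exact ⟨gs + us.erase f, subst_one3 hrefl hbt hus hf hgs,
    Multiset.mem_add.2 (Or.inl hg)⟩

/-- Antisymmetry of the descendant relation in a simple broad poset. -/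
lemma descends_antisymm3 [DecidableEq X] {r : Rel X} (hrefl : ∀ e : X, r {e} e) (hbt : BTrans r)
    (hanti : ∀ e f : X, r {e} f → r {f} e → e = f) (hsimp : Simple r)
    {f e : X} (h1 : descends r f e) (h2 : descends r e f) : f = e := by
  obtain ⟨fs, hfs, hffs⟩ := h1
  obtain ⟨gs, hgs, hegs⟩ := h2
  have h := subst_one3 hrefl hbt hfs hffs hgs
  have hsing : gs + fs.erase f = {e} :=
    mem_rel_singleton3 hrefl hbt hsimp h (Multiset.mem_add.2 (Or.inl hegs))
  have hcard := congrArg Multiset.card hsing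
  rw [Multiset.card_add, Multiset.card_singleton] at hcard
  have hgpos : 0 < Multiset.card gs := Multiset.card_pos_iff_exists_mem.2 ⟨e, hegs⟩
  have herase0 : fs.erase f = 0 := by
    rw [← Multiset.card_eq_zero]; omega
  have hgs1 : gs = {e} := by rwa [herase0, add_zero] at hsing
  have hfs1 : fs = {f} := by
    have := Multiset.cons_erase hffs
    rw [herase0] at this; exact this.symm
  rw [hfs1] at hfs
  rw [hgs1] at hgs
  exact (hanti e f hgs hfs).symm

/-- Main lemma: in a tree, every broad relation is generated by `e^↑ ≤ e`. -/
lemma gen_of_rel3 {r : Rel X} (ht : IsTree r) :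
    ∀ fs e, r fs e → GenRel (fun gs f => upTuple r f gs) fs e := by
  classical
  obtain ⟨⟨⟨hrefl, hbt⟩, hanti⟩, hfin, hsimp, hnode, -⟩ := ht
  haveI : Finite X := hfin
  -- measure decrease
  have hdec : ∀ {e : X} {us : Multiset X}, upTuple r e us → ∀ f ∈ us,
      {g | descends r g f}.ncard < {g | descends r g e}.ncard := by
    intro e us hup f hf
    have hfe : descends r f e := ⟨us, hup.1.1, hf⟩
    have hsub : {g | descends r g f} ⊂ {g | descends r g e} := by
      constructor
      · intro g hg; exact descends_trans3 hrefl hbt hg hfe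
      · intro hle
        have hee : descends r e e := ⟨{e}, hrefl e, Multiset.mem_singleton_self e⟩
        have hef : descends r e f := hle hee
        have hfeq : f = e := descends_antisymm3 hrefl hbt hanti hsimp hfe hef
        rw [hfeq] at hf
        exact hup.1.2 (mem_rel_singleton3 hrefl hbt hsimp hup.1.1 hf)
    exact Set.ncard_lt_ncard hsub (Set.toFinite _)
  have main : ∀ n, ∀ e fs, {g | descends r g e}.ncard ≤ n → r fs e →
      GenRel (fun gs f => upTuple r f gs) fs e := by
    intro n
    induction n with
    | zero =>
      intro e fs hcard _
      exfalso
      have : 0 < {g | descends r g e}.ncard :=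
        (Set.ncard_pos (Set.toFinite _)).2
          ⟨e, ⟨{e}, hrefl e, Multiset.mem_singleton_self e⟩⟩
      omega
    | succ n ih =>
      intro e fs hcard hr
      by_cases hfs : fs = {e}
      · rw [hfs]; exact GenRel.refl e
      · have hnl : ¬ IsLeaf r e := fun h => h ⟨fs, hr, hfs⟩
        obtain ⟨us, hup⟩ := (hnode e).resolve_left hnl
        obtain ⟨p, hsnd, hfst, hq⟩ := hup.2 fs hr hfs
        have hgq : ∀ q ∈ p, GenRel (fun gs f => upTuple r f gs) q.1 q.2 := by
          intro q hq'
          have hq2 : q.2 ∈ us := hsnd ▸ Multiset.mem_map_of_mem Prod.snd hq'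
          have hlt := hdec hup q.2 hq2
          exact ih q.2 q.1 (by omega) (hq q hq')
        have hgus : GenRel (fun gs f => upTuple r f gs) (p.map Prod.snd) e := by
          rw [hsnd]; exact GenRel.of us e hup
        have := GenRel.btrans p e hgus hgq
        rwa [hfst] at this
  intro fs e hr
  exact main _ e fs le_rfl hr

end Aux3

/-- A set map from a tree to a broad poset is a broad poset
map iff it preserves the generating relations `e^↑ ≤ e`; consequently the
broad relations of a tree are generated (under reflexivity and broad
transitivity) by the relations `e^↑ ≤ e`. -/
theorem stmt3 {X Y : Type u} (r : Rel X) (a : Rel Y)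
    (ht : IsTree r) (ha : IsBroad a) (φ : X → Y) :
    ((∀ fs e, r fs e → a (fs.map φ) (φ e)) ↔
      (∀ e fs, upTuple r e fs → a (fs.map φ) (φ e))) ∧
    (∀ fs e, r fs e ↔ (GenRel fun gs f => upTuple r f gs) fs e) := by
  have hrefl := ht.1.1.1; have hbt := ht.1.1.2
  -- GenRel → r
  have back : ∀ fs e, (GenRel fun gs f => upTuple r f gs) fs e → r fs e := by
    intro fs e h
    induction h with
    | of gs f hg => exact hg.1.1
    | refl f => exact hrefl f
    | btrans p e _ _ ih1 ih2 => exact hbt p e ih1 ih2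
  -- GenRel preserved by φ into a
  have pres : ∀ fs e, (GenRel fun gs f => upTuple r f gs) fs e →
      (∀ e fs, upTuple r e fs → a (fs.map φ) (φ e)) →
      a (fs.map φ) (φ e) := by
    intro fs e h hgen
    induction h with
    | of gs f hg => exact hgen f gs hg
    | refl f =>
      simpa using ha.1.1 (φ f)
    | btrans p e _ _ ih1 ih2 =>
      have hmap : ∀ (s : Multiset (Multiset X)),
          (s.map (Multiset.map φ)).sum = s.sum.map φ := by
        intro s
        induction s using Multiset.induction with
        | empty => simp
        | cons x s ih => simp [ih]
      have h1 : a (((p.map fun q => (q.1.map φ, φ q.2))).map Prod.snd) (φ e) := by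
        rw [Multiset.map_map]
        have heq : (p.map (Prod.snd ∘ fun q : Multiset X × X => (q.1.map φ, φ q.2)))
            = (p.map Prod.snd).map φ := by
          rw [Multiset.map_map]; rfl
        rw [heq]; exact ih1
      have h2 : ∀ q ∈ (p.map fun q => (q.1.map φ, φ q.2)), a q.1 q.2 := by
        intro q hq
        obtain ⟨q', hq', rfl⟩ := Multiset.mem_map.1 hq
        exact ih2 q' hq'
      have h3 := ha.1.2 _ (φ e) h1 h2
      have heq : (((p.map fun q => (q.1.map φ, φ q.2))).map Prod.fst).sum
          = ((p.map Prod.fst).sum).map φ := by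
        rw [Multiset.map_map]
        have : (p.map (Prod.fst ∘ fun q : Multiset X × X => (q.1.map φ, φ q.2)))
            = (p.map Prod.fst).map (Multiset.map φ) := by
          rw [Multiset.map_map]; rfl
        rw [this, hmap]
      rwa [heq] at h3
  constructor
  · constructor
    · intro h e fs hu
      exact h fs e hu.1.1
    · intro h fs e hr
      exact pres fs e (gen_of_rel3 ht fs e hr) h
  · intro fs e
    exact ⟨gen_of_rel3 ht fs e, back fs e⟩

end BroadPaper
end

section
/- Let T be a tree and e ∈ T an edge. Then the pre-broad poset T^{≤e} with underlying set {f ∈ T : f ≤_d e} and generating relations f^↑ ≤ f for f ≤_d e is a tree. Similarly, for a ≤_d-incomparable tuple e̲ = e_1⋯e_n, the pre-broad poset T_{≮e̲} with underlying set {f ∈ T : ∀i, f ≮_d e_i} and generating relations f^↑ ≤ f for f with f ≮_d e_i and f ≠ e_i for all i, is a tree. Moreover T is isomorphic to the iterated grafting T_{≮e̲} ⨿_{e̲} (T^{≤e_1} ⨿ ⋯ ⨿ T^{≤e_n}). -/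
universe u

namespace BroadPaper

/-- Generators of `T^{≤e}`: vertices `f^↑ ≤ f` for `f ≤_d e`. -/
def belowGen {X : Type u} (r : Rel X) (e : X) : Rel X := fun fs f =>
  upTuple r f fs ∧ descends r f e

/-- The broad relation of `T^{≤e}` (generated by the vertices below `e`). -/
def rBelow {X : Type u} (r : Rel X) (e : X) : Rel X := GenRel (belowGen r e)

/-- Strict descendant relation `f <_d g`. -/
def sdescends {X : Type u} (r : Rel X) (f g : X) : Prop :=
  descends r f g ∧ f ≠ g

/-- Generators of `T_{≮e̲}`: vertices `f^↑ ≤ f` with `f ≮_d eᵢ` and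
`f ≠ eᵢ` for all `i`. -/
def aboveGen {X : Type u} (r : Rel X) (es : Multiset X) : Rel X := fun fs f =>
  upTuple r f fs ∧ ∀ g ∈ es, ¬ sdescends r f g ∧ f ≠ g

/-- The broad relation of `T_{≮e̲}`. -/
def rAbove {X : Type u} (r : Rel X) (es : Multiset X) : Rel X :=
  GenRel (aboveGen r es)

/-! ### Auxiliary multiset lemmas -/

section MultisetAux

variable {α : Type u} {β : Type u} {γ : Type u}

lemma msum_map {m : Multiset (Multiset α)} (g : α → β) :
    m.sum.map g = (m.map (Multiset.map g)).sum := by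
  induction m using Multiset.induction with
  | empty => simp
  | cons a s ih => simp [ih]

lemma mmem_sum {x : α} {m : Multiset (Multiset α)} (h : x ∈ m.sum) :
    ∃ s ∈ m, x ∈ s := by
  induction m using Multiset.induction with
  | empty => simp at h
  | cons a s ih =>
    rw [Multiset.sum_cons, Multiset.mem_add] at h
    rcases h with h | h
    · exact ⟨a, Multiset.mem_cons_self a s, h⟩
    · obtain ⟨t, ht, hx⟩ := ih h; exact ⟨t, Multiset.mem_cons_of_mem ht, hx⟩

lemma attach_map_fn (s : Multiset α) (g : α → β) :
    s.attach.map (fun x => g x.1) = s.map g := by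
  conv_rhs => rw [← Multiset.attach_map_val s]
  rw [Multiset.map_map]; rfl

/-- Choice over a multiset. -/
lemma multiset_choice {C : α → β → Prop} {m : Multiset α}
    (h : ∀ q ∈ m, ∃ b, C q b) :
    ∃ P : Multiset (α × β), P.map Prod.fst = m ∧ ∀ x ∈ P, C x.1 x.2 := by
  induction m using Multiset.induction with
  | empty => exact ⟨0, by simp⟩
  | cons a s ih =>
    obtain ⟨P, hP1, hP2⟩ := ih (fun q hq => h q (Multiset.mem_cons_of_mem hq))
    obtain ⟨b, hb⟩ := h a (Multiset.mem_cons_self a s)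
    refine ⟨(a, b) ::ₘ P, by simp [hP1], ?_⟩
    intro x hx
    rcases Multiset.mem_cons.mp hx with hx | hx
    · subst hx; exact hb
    · exact hP2 x hx

/-- Split a multiset along a decomposition of its image. -/
lemma map_eq_add_split (g : α → β) (s : Multiset β) (p : Multiset α)
    (t : Multiset β) (h : p.map g = s + t) :
    ∃ p₁ p₂, p = p₁ + p₂ ∧ p₁.map g = s ∧ p₂.map g = t := by
  classical
  induction s using Multiset.induction generalizing p with
  | empty => exact ⟨0, p, by simp, by simp, by simpa using h⟩
  | cons a s ih =>
    have ha : a ∈ p.map g := by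
      rw [h]; exact Multiset.mem_add.mpr (Or.inl (Multiset.mem_cons_self a s))
    obtain ⟨x, hx, hgx⟩ := Multiset.mem_map.mp ha
    have herase : (p.erase x).map g = s + t := by
      have hp : p = x ::ₘ p.erase x := (Multiset.cons_erase hx).symm
      rw [hp, Multiset.map_cons, hgx, Multiset.cons_add] at h
      exact (Multiset.cons_inj_right a).mp h
    obtain ⟨p₁, p₂, hpe, h1, h2⟩ := ih (p.erase x) herase
    refine ⟨x ::ₘ p₁, p₂, ?_, by simp [h1, hgx], h2⟩
    rw [Multiset.cons_add, ← hpe, Multiset.cons_erase hx]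

/-- Lift a multiset over `X` into the subtype of `P`. -/
def liftM {P : α → Prop} (m : Multiset α) (h : ∀ x ∈ m, P x) :
    Multiset {x // P x} :=
  m.attach.map (fun x => ⟨x.1, h x.1 x.2⟩)

@[simp] lemma liftM_map_val {P : α → Prop} (m : Multiset α) (h : ∀ x ∈ m, P x) :
    (liftM m h).map Subtype.val = m := by
  rw [liftM, Multiset.map_map]
  exact attach_map_fn m id |>.trans (Multiset.map_id m)

lemma mem_liftM {P : α → Prop} {m : Multiset α} {h : ∀ x ∈ m, P x}
    {y : {x // P x}} (hy : y.1 ∈ m) : y ∈ liftM m h := by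
  have : y.1 ∈ (liftM m h).map Subtype.val := by rw [liftM_map_val]; exact hy
  obtain ⟨z, hz, hzy⟩ := Multiset.mem_map.mp this
  exact (Subtype.ext hzy : z = y) ▸ hz

lemma msum_sum {m : Multiset (Multiset (Multiset α))} :
    m.sum.sum = (m.map Multiset.sum).sum := by
  induction m using Multiset.induction with
  | empty => simp
  | cons a s ih => simp [ih]

/-- Partition a multiset along a partition of its image. -/
lemma partition_along (p : Multiset α) (g : α → β)
    (P' : Multiset (Multiset β × γ)) (h : (P'.map Prod.fst).sum = p.map g) :
    ∃ P'' : Multiset (Multiset α × γ),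
      P''.map (fun x => (x.1.map g, x.2)) = P' ∧ (P''.map Prod.fst).sum = p := by
  induction P' using Multiset.induction generalizing p with
  | empty =>
    refine ⟨0, by simp, ?_⟩
    simp only [Multiset.map_zero, Multiset.sum_zero]
    have : p.map g = 0 := by simpa using h.symm
    exact (Multiset.eq_zero_of_forall_notMem (fun x hx =>
      by simpa [this] using Multiset.mem_map_of_mem g hx)).symm
  | cons a s ih =>
    rw [Multiset.map_cons, Multiset.sum_cons] at h
    obtain ⟨p₁, p₂, hp, h1, h2⟩ := map_eq_add_split g a.1 p (s.map Prod.fst).sum h.symm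
    obtain ⟨P₂, hP2a, hP2b⟩ := ih p₂ h2.symm
    refine ⟨(p₁, a.2) ::ₘ P₂, ?_, ?_⟩
    · rw [Multiset.map_cons, hP2a]
      simp [h1]
    · rw [Multiset.map_cons, Multiset.sum_cons, hP2b, hp]

end MultisetAux

/-! ### Basic lemmas about trees -/

section TreeAux

set_option linter.unusedSectionVars false

variable {X : Type u} {r : Rel X} [DecidableEq X]

lemma IsTree.rfl' (ht : IsTree r) (e : X) : r {e} e := ht.1.1.1 e

lemma IsTree.btr (ht : IsTree r) : BTrans r := ht.1.1.2

lemma IsTree.simple (ht : IsTree r) : Simple r := ht.2.2.1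

lemma IsTree.desc_refl (ht : IsTree r) (e : X) : descends r e e :=
  ⟨{e}, ht.rfl' e, Multiset.mem_singleton_self e⟩

/-- Substituting one relation into one slot of another. -/
lemma IsTree.subst (ht : IsTree r) {fs gs : Multiset X} {g h : X}
    (hgs : r gs h) (hg : g ∈ gs) (hfs : r fs g) :
    r ((gs.erase g) + fs) h := by
  classical
  have hb := ht.btr ((gs.erase g).map (fun y => ({y}, y)) + {(fs, g)}) h
  have hsnd : (((gs.erase g).map (fun y => (({y} : Multiset X), y))
      + {(fs, g)}).map Prod.snd) = gs := by
    rw [Multiset.map_add, Multiset.map_map, Multiset.map_singleton]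
    show (gs.erase g).map id + {g} = gs
    rw [Multiset.map_id]
    rw [add_comm, Multiset.singleton_add, Multiset.cons_erase hg]
  have hfst : ((((gs.erase g).map (fun y => (({y} : Multiset X), y))
      + {(fs, g)}).map Prod.fst)).sum = (gs.erase g) + fs := by
    rw [Multiset.map_add, Multiset.map_map, Multiset.map_singleton,
      Multiset.sum_add, Multiset.sum_singleton]
    congr 1
    exact Multiset.sum_map_singleton (gs.erase g)
  rw [hsnd, hfst] at hb
  apply hb hgs
  intro q hq
  rcases Multiset.mem_add.mp hq with hq | hq
  · obtain ⟨y, _, rfl⟩ := Multiset.mem_map.mp hq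
    exact ht.rfl' y
  · rw [Multiset.mem_singleton.mp hq]
    exact hfs

lemma IsTree.desc_trans (ht : IsTree r) {x g h : X}
    (h1 : descends r x g) (h2 : descends r g h) : descends r x h := by
  obtain ⟨fs, hfs, hx⟩ := h1
  obtain ⟨gs, hgs, hg⟩ := h2
  exact ⟨(gs.erase g) + fs, ht.subst hgs hg hfs,
    Multiset.mem_add.mpr (Or.inr hx)⟩

/-- In a simple broad poset, if `e ∈ fs ≤ e` then `fs = {e}`. -/
lemma IsTree.eq_singleton_of_self_mem (ht : IsTree r) {fs : Multiset X} {e : X}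
    (hfs : r fs e) (he : e ∈ fs) : fs = ({e} : Multiset X) := by
  classical
  by_contra hne
  have hsub := ht.subst hfs he hfs
  have hnd := ht.simple _ _ hsub
  have h0 : fs.erase e ≠ 0 := by
    intro h0
    apply hne
    have := Multiset.cons_erase he
    rw [h0] at this
    exact this.symm
  obtain ⟨y, hy⟩ := Multiset.exists_mem_of_ne_zero h0
  have hy2 : y ∈ fs := Multiset.mem_of_mem_erase hy
  have : 2 ≤ Multiset.count y (fs.erase e + fs) := by
    rw [Multiset.count_add]
    have c1 : 1 ≤ Multiset.count y (fs.erase e) := Multiset.one_le_count_iff_mem.mpr hy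
    have c2 : 1 ≤ Multiset.count y fs := Multiset.one_le_count_iff_mem.mpr hy2
    omega
  have := Multiset.nodup_iff_count_le_one.mp hnd y
  omega

lemma IsTree.desc_antisymm (ht : IsTree r) {x y : X}
    (h1 : descends r x y) (h2 : descends r y x) : x = y := by
  obtain ⟨fs, hfs, hx⟩ := h1
  obtain ⟨gs, hgs, hy⟩ := h2
  have hsub := ht.subst hgs hy hfs
  have hself : x ∈ gs.erase y + fs := Multiset.mem_add.mpr (Or.inr hx)
  have heq := ht.eq_singleton_of_self_mem hsub hself
  have hfs1 : fs = ({x} : Multiset X) := by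
    have hle : fs ≤ gs.erase y + fs := Multiset.le_add_left _ _
    rw [heq] at hle
    rcases Multiset.le_singleton.mp hle with h | h
    · rw [h] at hx; simp at hx
    · exact h
  have hgs1 : gs.erase y = 0 := by
    have hcard := congrArg Multiset.card heq
    rw [Multiset.card_add, hfs1] at hcard
    simpa using hcard
  have hgseq : gs = ({y} : Multiset X) := by
    have := Multiset.cons_erase hy
    rw [hgs1] at this
    exact this.symm
  rw [hfs1] at hfs
  rw [hgseq] at hgs
  exact ht.1.2 x y hfs hgs

/-- Letters of a non-identity relation are strict descendants. -/
lemma IsTree.sdesc_of_mem (ht : IsTree r) {fs : Multiset X} {f x : X}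
    (hfs : r fs f) (hne : fs ≠ ({f} : Multiset X)) (hx : x ∈ fs) :
    sdescends r x f := by
  refine ⟨⟨fs, hfs, hx⟩, ?_⟩
  intro h
  subst h
  exact hne (ht.eq_singleton_of_self_mem hfs hx)

/-- The measure: number of strict descendants. -/
noncomputable def meas (r : Rel X) (f : X) : ℕ :=
  {x | sdescends r x f}.ncard

lemma IsTree.meas_lt (ht : IsTree r) {a b : X} (h : sdescends r a b) :
    meas r a < meas r b := by
  have hfin : Finite X := ht.2.1
  apply Set.ncard_lt_ncard _ (Set.toFinite _)
  have hsub : {x | sdescends r x a} ⊆ {x | sdescends r x b} := by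
    intro x hx
    refine ⟨ht.desc_trans hx.1 h.1, ?_⟩
    intro hxb
    subst hxb
    exact h.2 (ht.desc_antisymm h.1 hx.1)
  rw [Set.ssubset_iff_of_subset hsub]
  refine ⟨a, h, ?_⟩
  intro ha
  exact ha.2 rfl

/-- A non-leaf has an upTuple. -/
lemma IsTree.upTuple_of_not_leaf (ht : IsTree r) {f : X}
    (h : ¬ IsLeaf r f) : ∃ gs, upTuple r f gs := by
  rcases ht.2.2.2.1 f with hl | hu
  · exact absurd hl h
  · exact hu

/-- Branch uniqueness: a common descendant of two letters of a relation
forces the letters to coincide. -/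
lemma IsTree.branch_unique (ht : IsTree r) {cs : Multiset X} {c g1 g2 a : X}
    (hcs : r cs c) (h1 : g1 ∈ cs) (h2 : g2 ∈ cs) (hne : g1 ≠ g2)
    (ha1 : descends r a g1) (ha2 : descends r a g2) : False := by
  obtain ⟨t1, ht1, hat1⟩ := ha1
  obtain ⟨t2, ht2, hat2⟩ := ha2
  have s1 : r (cs.erase g1 + t1) c := ht.subst hcs h1 ht1
  have hg2' : g2 ∈ cs.erase g1 + t1 :=
    Multiset.mem_add.mpr (Or.inl ((Multiset.mem_erase_of_ne (Ne.symm hne)).mpr h2))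
  have s2 : r (((cs.erase g1 + t1).erase g2) + t2) c := ht.subst s1 hg2' ht2
  have hnd := ht.simple _ _ s2
  have hcount : 2 ≤ Multiset.count a (((cs.erase g1 + t1).erase g2) + t2) := by
    rw [Multiset.count_add]
    have c2 : 1 ≤ Multiset.count a t2 := Multiset.one_le_count_iff_mem.mpr hat2
    have c1 : 1 ≤ Multiset.count a ((cs.erase g1 + t1).erase g2) := by
      by_cases hag : a = g2
      · subst hag
        rw [Multiset.count_erase_self, Multiset.count_add]
        have d1 : 1 ≤ Multiset.count a (cs.erase g1) :=
          Multiset.one_le_count_iff_mem.mpr ((Multiset.mem_erase_of_ne (Ne.symm hne)).mpr h2)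
        have d2 : 1 ≤ Multiset.count a t1 := Multiset.one_le_count_iff_mem.mpr hat1
        omega
      · rw [Multiset.count_erase_of_ne hag, Multiset.count_add]
        have d2 : 1 ≤ Multiset.count a t1 := Multiset.one_le_count_iff_mem.mpr hat1
        omega
    omega
  have := Multiset.nodup_iff_count_le_one.mp hnd a
  omega

/-- Distinct letters of a relation are incomparable. -/
lemma IsTree.mem_incomp (ht : IsTree r) {cs : Multiset X} {c g g' : X}
    (hcs : r cs c) (h1 : g ∈ cs) (h2 : g' ∈ cs) (hne : g ≠ g')
    (hd : descends r g g') : False :=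
  ht.branch_unique hcs h2 h1 (Ne.symm hne) hd (ht.desc_refl g)

/-- A strict descendant descends through the upTuple. -/
lemma IsTree.desc_up (ht : IsTree r) {f c : X} {cs : Multiset X}
    (hup : upTuple r c cs) (h : sdescends r f c) :
    ∃ y ∈ cs, descends r f y := by
  obtain ⟨⟨fs, hfs, hmem⟩, hne⟩ := h
  have hfsne : fs ≠ ({c} : Multiset X) := by
    intro heq; subst heq; exact hne (Multiset.mem_singleton.mp hmem)
  obtain ⟨p, hsnd, hfst, hblk⟩ := hup.2 fs hfs hfsne
  rw [← hfst] at hmem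
  obtain ⟨s, hs, hfs'⟩ := mmem_sum hmem
  obtain ⟨q, hq, rfl⟩ := Multiset.mem_map.mp hs
  refine ⟨q.2, ?_, ⟨q.1, hblk q hq, hfs'⟩⟩
  rw [← hsnd]
  exact Multiset.mem_map_of_mem Prod.snd hq

/-- Elements of an upTuple are strict descendants. -/
lemma IsTree.up_sdesc (ht : IsTree r) {c : X} {cs : Multiset X}
    (hup : upTuple r c cs) {g : X} (hg : g ∈ cs) : sdescends r g c :=
  ht.sdesc_of_mem hup.1.1 hup.1.2 hg

lemma IsTree.not_leaf_of_sdesc (ht : IsTree r) {a c : X}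
    (h : sdescends r a c) : ¬ IsLeaf r c := by
  obtain ⟨⟨fs, hfs, hmem⟩, hne⟩ := h
  intro hl
  exact hl ⟨fs, hfs, fun heq => hne (by rw [heq] at hmem; exact Multiset.mem_singleton.mp hmem)⟩

lemma IsTree.chain_aux (ht : IsTree r) :
    ∀ (n : ℕ) (c a b g : X), meas r c < n → descends r a c → descends r b c →
      descends r g a → descends r g b → descends r a b ∨ descends r b a := by
  intro n
  induction n with
  | zero => intro c a b g h; omega
  | succ n ih =>
    intro c a b g hm hac hbc hga hgb
    by_cases hacq : a = c
    · subst hacq; exact Or.inr hbc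
    by_cases hbcq : b = c
    · subst hbcq; exact Or.inl hac
    obtain ⟨cs, hup⟩ := ht.upTuple_of_not_leaf (ht.not_leaf_of_sdesc ⟨hac, hacq⟩)
    obtain ⟨a₀, ha₀, haa₀⟩ := ht.desc_up hup ⟨hac, hacq⟩
    obtain ⟨b₀, hb₀, hbb₀⟩ := ht.desc_up hup ⟨hbc, hbcq⟩
    have heq : a₀ = b₀ := by
      by_contra hne
      exact ht.branch_unique hup.1.1 ha₀ hb₀ hne
        (ht.desc_trans hga haa₀) (ht.desc_trans hgb hbb₀)
    subst heq
    have hlt : meas r a₀ < n := by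
      have := ht.meas_lt (ht.up_sdesc hup ha₀)
      omega
    exact ih a₀ a b g hlt haa₀ hbb₀ hga hgb

/-- Ancestors form a chain. -/
lemma IsTree.chain (ht : IsTree r) {a b g : X}
    (hga : descends r g a) (hgb : descends r g b) :
    descends r a b ∨ descends r b a := by
  obtain ⟨rt, hrt⟩ := ht.2.2.2.2
  exact ht.chain_aux (meas r rt + 1) rt a b g (by omega) (hrt a) (hrt b) hga hgb

/-- Uniqueness of the upTuple. -/
lemma IsTree.upTuple_unique (ht : IsTree r) {f : X} {gs gs' : Multiset X}
    (hu : upTuple r f gs) (hu' : upTuple r f gs') : gs = gs' := by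
  have key : ∀ (as bs : Multiset X), upTuple r f as → upTuple r f bs →
      ∀ h ∈ as, h ∈ bs := by
    intro as bs ha hb h hmem0
    obtain ⟨p, hsnd, hfst, hblk⟩ := hb.2 as ha.1.1 ha.1.2
    have hmem : h ∈ (p.map Prod.fst).sum := by rw [hfst]; exact hmem0
    obtain ⟨s, hs, hmem'⟩ := mmem_sum hmem
    obtain ⟨q, hq, rfl⟩ := Multiset.mem_map.mp hs
    have hx : q.2 ∈ bs := by rw [← hsnd]; exact Multiset.mem_map_of_mem Prod.snd hq
    have hhx : descends r h q.2 := ⟨q.1, hblk q hq, hmem'⟩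
    obtain ⟨p', hsnd', hfst', hblk'⟩ := ha.2 bs hb.1.1 hb.1.2
    have hx2 : q.2 ∈ (p'.map Prod.fst).sum := by rw [hfst']; exact hx
    obtain ⟨s', hs', hmem''⟩ := mmem_sum hx2
    obtain ⟨q', hq', rfl⟩ := Multiset.mem_map.mp hs'
    have hh' : q'.2 ∈ as := by rw [← hsnd']; exact Multiset.mem_map_of_mem Prod.snd hq'
    have hxh' : descends r q.2 q'.2 := ⟨q'.1, hblk' q' hq', hmem''⟩
    have hhh' : h = q'.2 := by
      by_contra hne
      exact ht.mem_incomp ha.1.1 hmem0 hh' hne (ht.desc_trans hhx hxh')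
    have : h = q.2 := ht.desc_antisymm hhx (hhh' ▸ hxh')
    exact this ▸ hx
  exact (Multiset.Nodup.ext (ht.simple _ _ hu.1.1) (ht.simple _ _ hu'.1.1)).mpr
    (fun a => ⟨key gs gs' hu hu' a, key gs' gs hu' hu a⟩)

end TreeAux

/-! ### The relation below an edge -/

section BelowAux

set_option linter.unusedSectionVars false

variable {X : Type u} {r : Rel X} [DecidableEq X]

lemma GenRel_sub {gen : Rel X} (hrefl : ∀ e, r {e} e) (hbtr : BTrans r)
    (hgen : ∀ fs f, gen fs f → r fs f) :
    ∀ {fs f}, GenRel gen fs f → r fs f := by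
  intro fs f h
  induction h with
  | of fs e h => exact hgen fs e h
  | refl e => exact hrefl e
  | btrans p e _ _ ih1 ih2 => exact hbtr p e ih1 ih2

lemma rBelow_sub (ht : IsTree r) {e : X} {fs : Multiset X} {f : X}
    (h : rBelow r e fs f) : r fs f :=
  GenRel_sub ht.rfl' ht.btr (fun _ _ hg => hg.1.1.1) h

lemma rBelow_of_rel_aux (ht : IsTree r) (e : X) :
    ∀ (n : ℕ) (f : X) (fs : Multiset X), meas r f < n → descends r f e →
      r fs f → rBelow r e fs f := by
  intro n
  induction n with
  | zero => intro f fs h; omega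
  | succ n ih =>
    intro f fs hm hfe hfs
    by_cases hne : fs = ({f} : Multiset X)
    · subst hne; exact GenRel.refl f
    have hnl : ¬ IsLeaf r f := fun hl => hl ⟨fs, hfs, hne⟩
    obtain ⟨gs, hup⟩ := ht.upTuple_of_not_leaf hnl
    obtain ⟨p, hsnd, hfst, hblk⟩ := hup.2 fs hfs hne
    have htop : rBelow r e (p.map Prod.snd) f := by
      rw [hsnd]; exact GenRel.of _ _ ⟨hup, hfe⟩
    have hblks : ∀ q ∈ p, rBelow r e q.1 q.2 := by
      intro q hq
      have hq2 : q.2 ∈ gs := by rw [← hsnd]; exact Multiset.mem_map_of_mem Prod.snd hq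
      have hsd := ht.up_sdesc hup hq2
      have hlt : meas r q.2 < n := by have := ht.meas_lt hsd; omega
      exact ih q.2 q.1 hlt (ht.desc_trans hsd.1 hfe) (hblk q hq)
    have := GenRel.btrans p f htop hblks
    rwa [hfst] at this

/-- Claim B: below a fixed edge, `rBelow` agrees with `r`. -/
lemma rBelow_iff (ht : IsTree r) {e f : X} (hfe : descends r f e)
    (fs : Multiset X) : rBelow r e fs f ↔ r fs f :=
  ⟨rBelow_sub ht, fun h =>
    rBelow_of_rel_aux ht e (meas r f + 1) f fs (by omega) hfe h⟩

end BelowAux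

/-! ### The relation above a tuple of incomparable edges -/

section AboveAux

set_option linter.unusedSectionVars false

variable {X : Type u} {r : Rel X} {es : Multiset X} [DecidableEq X]

lemma rAbove_sub (ht : IsTree r) {fs : Multiset X} {f : X}
    (h : rAbove r es fs f) : r fs f :=
  GenRel_sub ht.rfl' ht.btr (fun _ _ hg => hg.1.1.1) h

lemma U'_of_cond {f : X} (h : ∀ g ∈ es, ¬ sdescends r f g ∧ f ≠ g) :
    ∀ g ∈ es, ¬ descends r f g :=
  fun g hg hd => (h g hg).1 ⟨hd, (h g hg).2⟩

/-- Members of the upTuple of an element not below `es` are not strictly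
below `es`. -/
lemma up_mem_U (ht : IsTree r) {f : X} {gs : Multiset X}
    (hU' : ∀ g ∈ es, ¬ descends r f g) (hup : upTuple r f gs) :
    ∀ g ∈ gs, ∀ ei ∈ es, ¬ sdescends r g ei := by
  intro g hg ei hei ⟨hdge, hnege⟩
  have hgf := ht.up_sdesc hup hg
  rcases ht.chain hdge hgf.1 with hef | hfe
  · -- descends ei f
    have heif : ei ≠ f := by
      intro h; subst h; exact hU' ei hei (ht.desc_refl ei)
    obtain ⟨g'', hg'', heig''⟩ := ht.desc_up hup ⟨hef, heif⟩
    by_cases hgg : g = g''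
    · subst hgg
      exact hnege (ht.desc_antisymm hdge heig'')
    · exact ht.mem_incomp hup.1.1 hg hg'' hgg (ht.desc_trans hdge heig'')
  · exact hU' ei hei hfe

/-- C1: letters of an `rAbove` relation are not strictly below `es`
(or equal the head). -/
lemma rAbove_letters (ht : IsTree r) {fs : Multiset X} {f : X}
    (h : rAbove r es fs f) :
    ∀ x ∈ fs, (∀ g ∈ es, ¬ sdescends r x g) ∨ x = f := by
  induction h with
  | of fs e h =>
    intro x hx
    exact Or.inl (up_mem_U ht (U'_of_cond h.2) h.1 x hx)
  | refl e =>
    intro x hx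
    exact Or.inr (Multiset.mem_singleton.mp hx)
  | btrans p e htop hblk ih1 ih2 =>
    intro x hx
    obtain ⟨s, hs, hx'⟩ := mmem_sum hx
    obtain ⟨q, hq, rfl⟩ := Multiset.mem_map.mp hs
    rcases ih2 q hq x hx' with h | h
    · exact Or.inl h
    · rcases ih1 q.2 (Multiset.mem_map_of_mem Prod.snd hq) with h' | h'
      · exact Or.inl (h ▸ h')
      · exact Or.inr (h.trans h')

/-- C3: in `rAbove`, the marked edges are leaves. -/
lemma rAbove_es_leaf (ht : IsTree r) {fs : Multiset X} {f : X}
    (h : rAbove r es fs f) (hf : f ∈ es) : fs = ({f} : Multiset X) := by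
  induction h with
  | of fs e h => exact absurd rfl (h.2 e hf).2
  | refl e => rfl
  | btrans p e htop hblk ih1 ih2 =>
    obtain ⟨q0, hq0, hq02⟩ := Multiset.map_eq_singleton.mp (ih1 hf)
    subst hq0
    simp only [Multiset.map_singleton, Multiset.sum_singleton]
    have := ih2 q0 (Multiset.mem_singleton_self q0)
    rw [hq02] at this
    exact this hf

lemma tupleLE_refl_s6 {R : Rel X} (hrefl : ∀ x, R {x} x) (m : Multiset X) :
    tupleLE R m m := by
  refine ⟨m.map (fun y => (({y} : Multiset X), y)), ?_, ?_, ?_⟩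
  · rw [Multiset.map_map]; exact (attach_map_fn m id).symm ▸ (by simp)
  · rw [Multiset.map_map]
    show (m.map fun y => ({y} : Multiset X)).sum = m
    exact Multiset.sum_map_singleton m
  · intro q hq
    obtain ⟨y, _, rfl⟩ := Multiset.mem_map.mp hq
    exact hrefl y

/-- C4: inversion for `rAbove`: each relation is the identity or factors
through the upTuple. -/
lemma rAbove_inversion (ht : IsTree r) {fs : Multiset X} {f : X}
    (h : rAbove r es fs f) :
    ∀ gs, upTuple r f gs → fs = ({f} : Multiset X) ∨
      tupleLE (rAbove r es) fs gs := by
  induction h with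
  | of fs0 e h =>
    intro gs hup
    have : fs0 = gs := ht.upTuple_unique h.1 hup
    subst this
    exact Or.inr (tupleLE_refl_s6 (fun x => GenRel.refl x) fs0)
  | refl e =>
    intro gs hup
    exact Or.inl rfl
  | btrans p e htop hblk ih1 ih2 =>
    intro gs hup
    rcases ih1 gs hup with h1 | h1
    · -- p.map Prod.snd = {e}
      obtain ⟨q0, hq0, hq02⟩ := Multiset.map_eq_singleton.mp h1
      subst hq0
      simp only [Multiset.map_singleton, Multiset.sum_singleton]
      rcases ih2 q0 (Multiset.mem_singleton_self q0) gs (hq02 ▸ hup) with h2 | h2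
      · exact Or.inl (h2.trans (by rw [hq02]))
      · exact Or.inr h2
    · -- tupleLE (rAbove r es) (p.map Prod.snd) gs
      obtain ⟨P', hsnd', hfst', hblk'⟩ := h1
      obtain ⟨P'', hPP, hPp⟩ := partition_along p Prod.snd P' hfst'
      refine Or.inr ⟨P''.map (fun x => ((x.1.map Prod.fst).sum, x.2)), ?_, ?_, ?_⟩
      · rw [Multiset.map_map]
        calc P''.map (Prod.snd ∘ fun x => ((x.1.map Prod.fst).sum, x.2))
            = P''.map (fun x => x.2) := rfl
          _ = (P''.map (fun x => (x.1.map Prod.snd, x.2))).map Prod.snd := by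
              rw [Multiset.map_map]; rfl
          _ = P'.map Prod.snd := by rw [hPP]
          _ = gs := hsnd'
      · rw [Multiset.map_map]
        calc (P''.map (Prod.fst ∘ fun x => ((x.1.map Prod.fst).sum, x.2))).sum
            = (P''.map (fun x => (x.1.map Prod.fst).sum)).sum := rfl
          _ = ((P''.map (fun (x : Multiset (Multiset X × X) × X) => x.1.map Prod.fst)).map Multiset.sum).sum := by
              rw [Multiset.map_map]; rfl
          _ = (P''.map (fun (x : Multiset (Multiset X × X) × X) => x.1.map Prod.fst)).sum.sum := msum_sum.symm
          _ = (((P''.map Prod.fst).map (Multiset.map Prod.fst))).sum.sum := by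
              rw [Multiset.map_map]; rfl
          _ = ((P''.map Prod.fst).sum.map Prod.fst).sum := by rw [msum_map]
          _ = (p.map Prod.fst).sum := by rw [hPp]
      · intro q hq
        obtain ⟨x, hx, rfl⟩ := Multiset.mem_map.mp hq
        refine GenRel.btrans x.1 x.2 ?_ ?_
        · have hmem : (x.1.map Prod.snd, x.2) ∈ P' := by
            rw [← hPP]; exact Multiset.mem_map_of_mem _ hx
          exact hblk' _ hmem
        · intro q' hq'
          have : q' ∈ p := by
            rw [← hPp]
            exact Multiset.mem_of_le
              (Multiset.le_sum_of_mem (Multiset.mem_map_of_mem Prod.fst hx)) hq'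
          exact hblk q' this

end AboveAux

/-! ### Restricting a generated relation to a subtype -/

section SubtypeTree

set_option linter.unusedSectionVars false

variable {X : Type u} {r : Rel X} [DecidableEq X]

lemma subtype_tree_of (ht : IsTree r) (R : Rel X) (P : X → Prop)
    (hR_r : ∀ fs f, R fs f → r fs f)
    (hrefl : ∀ f, R {f} f) (hbtr : BTrans R)
    (hlet : ∀ fs f, R fs f → P f → ∀ x ∈ fs, P x)
    (hvert : ∀ f, P f → (∀ fs, R fs f → fs = ({f} : Multiset X)) ∨
      ∃ gs, (∀ g ∈ gs, P g) ∧ R gs f ∧ gs ≠ ({f} : Multiset X) ∧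
        ∀ hs, R hs f → hs ≠ ({f} : Multiset X) → tupleLE R hs gs)
    (hroot : ∃ rt, P rt ∧ ∀ f, P f → ∃ fs, R fs rt ∧ f ∈ fs) :
    IsTree (fun (fs : Multiset {x // P x}) (f : {x // P x}) =>
      R (fs.map Subtype.val) f.val) := by
  have hinj : Function.Injective (Subtype.val : {x // P x} → X) :=
    Subtype.val_injective
  have hmapinj := Multiset.map_injective (f := (Subtype.val : {x // P x} → X)) hinj
  refine ⟨⟨⟨?_, ?_⟩, ?_⟩, ?_, ?_, ?_, ?_⟩
  · -- reflexivity
    intro f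
    simpa using hrefl f.1
  · -- broad transitivity
    intro p e h1 h2
    have := hbtr (p.map (fun q => (q.1.map Subtype.val, q.2.1))) e.1 ?_ ?_
    · have heq : ((p.map (fun q => (q.1.map Subtype.val, q.2.1))).map Prod.fst).sum
          = ((p.map Prod.fst).sum).map Subtype.val := by
        rw [Multiset.map_map, msum_map, Multiset.map_map]
        rfl
      rwa [heq] at this
    · have heq : (p.map (fun q => (q.1.map Subtype.val, q.2.1))).map Prod.snd
          = (p.map Prod.snd).map Subtype.val := by
        rw [Multiset.map_map, Multiset.map_map]; rfl
      rwa [heq]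
    · intro q hq
      obtain ⟨q0, hq0, rfl⟩ := Multiset.mem_map.mp hq
      exact h2 q0 hq0
  · -- antisymmetry
    intro a b h1 h2
    apply Subtype.ext
    apply ht.1.2
    · simpa using hR_r _ _ h1
    · simpa using hR_r _ _ h2
  · -- finiteness
    have : Finite X := ht.2.1
    exact Subtype.finite
  · -- simplicity
    intro fs f h
    exact Multiset.Nodup.of_map _ (ht.simple _ _ (hR_r _ _ h))
  · -- vertices
    intro f
    rcases hvert f.1 f.2 with hleaf | ⟨gs, hPgs, hRgs, hgsne, hmax⟩
    · left
      rintro ⟨fs, hfs, hne⟩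
      apply hne
      apply hmapinj
      rw [hleaf _ hfs]
      simp
    · right
      refine ⟨liftM gs hPgs, ⟨⟨?_, ?_⟩, ?_⟩⟩
      · show R ((liftM gs hPgs).map Subtype.val) f.1
        rwa [liftM_map_val]
      · intro h
        apply hgsne
        have := congrArg (Multiset.map Subtype.val) h
        rwa [liftM_map_val, Multiset.map_singleton] at this
      · intro hs hRhs hsne
        have hvne : hs.map Subtype.val ≠ ({f.1} : Multiset X) := by
          intro h
          exact hsne (hmapinj (by rw [h]; simp))
        obtain ⟨p, hsnd, hfst, hblk⟩ := hmax _ hRhs hvne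
        have hch : ∀ q ∈ p, ∃ q' : Multiset {x // P x} × {x // P x},
            q'.1.map Subtype.val = q.1 ∧ q'.2.1 = q.2 := by
          intro q hq
          have hq2 : P q.2 := by
            have : q.2 ∈ gs := by
              rw [← hsnd]; exact Multiset.mem_map_of_mem Prod.snd hq
            exact hPgs _ this
          have hq1 : ∀ x ∈ q.1, P x := by
            intro x hx
            have hx' : x ∈ hs.map Subtype.val := by
              rw [← hfst]
              exact Multiset.mem_of_le
                (Multiset.le_sum_of_mem (Multiset.mem_map_of_mem Prod.fst hq)) hx
            obtain ⟨y, _, rfl⟩ := Multiset.mem_map.mp hx'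
            exact y.2
          exact ⟨(liftM q.1 hq1, ⟨q.2, hq2⟩), liftM_map_val q.1 hq1, rfl⟩
        obtain ⟨PL, hPL1, hPL2⟩ := multiset_choice hch
        refine ⟨PL.map Prod.snd, ?_, ?_, ?_⟩
        · apply hmapinj
          rw [Multiset.map_map, Multiset.map_map, liftM_map_val]
          calc PL.map (fun x => x.2.2.1)
              = PL.map (fun x => x.1.2) :=
                Multiset.map_congr rfl (fun x hx => (hPL2 x hx).2)
            _ = (PL.map Prod.fst).map Prod.snd := by rw [Multiset.map_map]; rfl
            _ = gs := by rw [hPL1, hsnd]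
        · apply hmapinj
          rw [Multiset.map_map, msum_map, Multiset.map_map]
          calc (PL.map (fun x => x.2.1.map Subtype.val)).sum
              = (PL.map (fun x => x.1.1)).sum := by
                rw [Multiset.map_congr rfl (fun x hx => (hPL2 x hx).1)]
            _ = ((PL.map Prod.fst).map Prod.fst).sum := by rw [Multiset.map_map]; rfl
            _ = hs.map Subtype.val := by rw [hPL1, hfst]
        · intro q hq
          obtain ⟨x, hx, rfl⟩ := Multiset.mem_map.mp hq
          show R (x.2.1.map Subtype.val) x.2.2.1
          rw [(hPL2 x hx).1, (hPL2 x hx).2]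
          apply hblk
          rw [← hPL1]
          exact Multiset.mem_map_of_mem Prod.fst hx
  · -- root
    obtain ⟨rt, hPrt, hrtd⟩ := hroot
    refine ⟨⟨rt, hPrt⟩, ?_⟩
    intro f
    obtain ⟨fs, hRfs, hmem⟩ := hrtd f.1 f.2
    have hPfs : ∀ x ∈ fs, P x := hlet _ _ hRfs hPrt
    refine ⟨liftM fs hPfs, ?_, mem_liftM hmem⟩
    show R ((liftM fs hPfs).map Subtype.val) rt
    rwa [liftM_map_val]

end SubtypeTree

/-! ### Assembling the pieces -/

section Assemble

set_option linter.unusedSectionVars false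

variable {X : Type u} {r : Rel X} {es : Multiset X} [DecidableEq X]

/-- Substitution for any reflexive, broadly transitive relation. -/
lemma btrans_subst {R : Rel X} (hrefl : ∀ x, R {x} x) (hbtr : BTrans R)
    {gs fs : Multiset X} {g h : X}
    (hgs : R gs h) (hg : g ∈ gs) (hfs : R fs g) :
    R ((gs.erase g) + fs) h := by
  have hb := hbtr ((gs.erase g).map (fun y => ({y}, y)) + {(fs, g)}) h
  have hsnd : (((gs.erase g).map (fun y => (({y} : Multiset X), y))
      + {(fs, g)}).map Prod.snd) = gs := by
    rw [Multiset.map_add, Multiset.map_map, Multiset.map_singleton]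
    show (gs.erase g).map id + {g} = gs
    rw [Multiset.map_id]
    rw [add_comm, Multiset.singleton_add, Multiset.cons_erase hg]
  have hfst : ((((gs.erase g).map (fun y => (({y} : Multiset X), y))
      + {(fs, g)}).map Prod.fst)).sum = (gs.erase g) + fs := by
    rw [Multiset.map_add, Multiset.map_map, Multiset.map_singleton,
      Multiset.sum_add, Multiset.sum_singleton]
    congr 1
    exact Multiset.sum_map_singleton (gs.erase g)
  rw [hsnd, hfst] at hb
  apply hb hgs
  intro q hq
  rcases Multiset.mem_add.mp hq with hq | hq
  · obtain ⟨y, _, rfl⟩ := Multiset.mem_map.mp hq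
    exact hrefl y
  · rw [Multiset.mem_singleton.mp hq]
    exact hfs

/-- `T^{≤ e}` is a tree. -/
lemma below_isTree (ht : IsTree r) (e : X) :
    IsTree (fun (fs : Multiset {f : X // descends r f e})
        (f : {f : X // descends r f e}) =>
      rBelow r e (fs.map Subtype.val) f.val) := by
  apply subtype_tree_of ht (rBelow r e) (fun f => descends r f e)
  · exact fun _ _ => rBelow_sub ht
  · exact fun f => GenRel.refl f
  · exact fun p e' h1 h2 => GenRel.btrans p e' h1 h2
  · intro fs f h hf x hx
    exact ht.desc_trans ⟨fs, rBelow_sub ht h, hx⟩ hf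
  · intro f hf
    by_cases hl : IsLeaf r f
    · left
      intro fs hfs
      by_contra hne
      exact hl ⟨fs, rBelow_sub ht hfs, hne⟩
    · right
      obtain ⟨gs, hup⟩ := ht.upTuple_of_not_leaf hl
      refine ⟨gs, ?_, GenRel.of _ _ ⟨hup, hf⟩, hup.1.2, ?_⟩
      · intro g hg
        exact ht.desc_trans (ht.up_sdesc hup hg).1 hf
      · intro hs hRhs hne
        obtain ⟨p, h1, h2, h3⟩ := hup.2 hs (rBelow_sub ht hRhs) hne
        refine ⟨p, h1, h2, ?_⟩
        intro q hq
        have hq2 : q.2 ∈ gs := by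
          rw [← h1]; exact Multiset.mem_map_of_mem Prod.snd hq
        exact (rBelow_iff ht (ht.desc_trans (ht.up_sdesc hup hq2).1 hf) q.1).mpr
          (h3 q hq)
  · refine ⟨e, ht.desc_refl e, ?_⟩
    intro f hf
    obtain ⟨fs, hfs, hmem⟩ := hf
    exact ⟨fs, (rBelow_iff ht (ht.desc_refl e) fs).mpr hfs, hmem⟩

lemma U'_of_U_notmem {f : X} (hU : ∀ g ∈ es, ¬ sdescends r f g)
    (hes : f ∉ es) : ∀ g ∈ es, ¬ descends r f g := by
  intro g hg hd
  by_cases hfg : f = g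
  · exact hes (hfg ▸ hg)
  · exact hU g hg ⟨hd, hfg⟩

lemma aboveGen_conds {f : X} (hU : ∀ g ∈ es, ¬ sdescends r f g)
    (hes : f ∉ es) : ∀ g ∈ es, ¬ sdescends r f g ∧ f ≠ g :=
  fun g hg => ⟨hU g hg, fun h => hes (h ▸ hg)⟩

/-- Every element of `U` is connected to the root inside `rAbove`. -/
lemma above_reach_root (ht : IsTree r) :
    ∀ (n : ℕ) (c f : X), meas r c < n →
      (∀ g ∈ es, ¬ sdescends r c g) → (∀ g ∈ es, ¬ sdescends r f g) →
      descends r f c → ∃ fs, rAbove r es fs c ∧ f ∈ fs := by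
  intro n
  induction n with
  | zero => intro c f h; omega
  | succ n ih =>
    intro c f hm hUc hUf hfc
    by_cases hfceq : f = c
    · exact ⟨{c}, GenRel.refl c, by simp [hfceq]⟩
    have hsd : sdescends r f c := ⟨hfc, hfceq⟩
    have hces : c ∉ es := fun hces => hUf c hces hsd
    have hU'c := U'_of_U_notmem hUc hces
    obtain ⟨cs, hup⟩ := ht.upTuple_of_not_leaf (ht.not_leaf_of_sdesc hsd)
    obtain ⟨c₀, hc₀, hfc₀⟩ := ht.desc_up hup hsd
    have hUc₀ := up_mem_U ht hU'c hup c₀ hc₀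
    have hlt : meas r c₀ < n := by
      have := ht.meas_lt (ht.up_sdesc hup hc₀); omega
    obtain ⟨b, hb, hfb⟩ := ih c₀ f hlt hUc₀ hUf hfc₀
    refine ⟨cs.erase c₀ + b, ?_, Multiset.mem_add.mpr (Or.inr hfb)⟩
    exact btrans_subst (fun x => GenRel.refl x)
      (fun p e' h1 h2 => GenRel.btrans p e' h1 h2)
      (GenRel.of _ _ ⟨hup, aboveGen_conds hUc hces⟩) hc₀ hb

/-- `T_{≮ es}` is a tree. -/
lemma above_isTree (ht : IsTree r) :
    IsTree (fun (fs : Multiset {f : X // ∀ g ∈ es, ¬ sdescends r f g})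
        (f : {f : X // ∀ g ∈ es, ¬ sdescends r f g}) =>
      rAbove r es (fs.map Subtype.val) f.val) := by
  apply subtype_tree_of ht (rAbove r es) (fun f => ∀ g ∈ es, ¬ sdescends r f g)
  · exact fun _ _ => rAbove_sub ht
  · exact fun f => GenRel.refl f
  · exact fun p e' h1 h2 => GenRel.btrans p e' h1 h2
  · intro fs f h hf x hx
    rcases rAbove_letters ht h x hx with h' | h'
    · exact h'
    · exact h' ▸ hf
  · intro f hf
    by_cases hes : f ∈ es
    · left
      exact fun fs hfs => rAbove_es_leaf ht hfs hes
    by_cases hl : IsLeaf r f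
    · left
      intro fs hfs
      by_contra hne
      exact hl ⟨fs, rAbove_sub ht hfs, hne⟩
    · right
      obtain ⟨gs, hup⟩ := ht.upTuple_of_not_leaf hl
      refine ⟨gs, up_mem_U ht (U'_of_U_notmem hf hes) hup,
        GenRel.of _ _ ⟨hup, aboveGen_conds hf hes⟩, hup.1.2, ?_⟩
      intro hs hRhs hne
      rcases rAbove_inversion ht hRhs gs hup with h | h
      · exact absurd h hne
      · exact h
  · obtain ⟨rt, hrt⟩ := ht.2.2.2.2
    have hUrt : ∀ g ∈ es, ¬ sdescends r rt g := by
      intro g hg ⟨hd, hne⟩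
      exact hne (ht.desc_antisymm hd (hrt g))
    refine ⟨rt, hUrt, ?_⟩
    intro f hUf
    exact above_reach_root ht (meas r rt + 1) rt f (by omega) hUrt hUf (hrt f)

/-- The grafting decomposition predicate. -/
def DD (r : Rel X) (es : Multiset X) (fs : Multiset X) (f : X) : Prop :=
  ∃ (ts : Multiset X) (p : Multiset (Multiset X × X)),
    rAbove r es (ts + p.map Prod.snd) f ∧
    (∀ q ∈ p, q.2 ∈ es ∧ rBelow r q.2 q.1 q.2) ∧
    fs = ts + (p.map Prod.fst).sum

/-- `DD` is stable under broad transitivity over `rAbove`. -/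
lemma DD_btrans (P0 : Multiset (Multiset X × X)) (f : X)
    (htop : rAbove r es (P0.map Prod.snd) f)
    (hblk : ∀ q ∈ P0, DD r es q.1 q.2) :
    DD r es ((P0.map Prod.fst).sum) f := by
  obtain ⟨P1, hP1, hP2⟩ := multiset_choice (C := fun (q : Multiset X × X)
      (b : Multiset X × Multiset (Multiset X × X)) =>
      rAbove r es (b.1 + b.2.map Prod.snd) q.2 ∧
      (∀ q' ∈ b.2, q'.2 ∈ es ∧ rBelow r q'.2 q'.1 q'.2) ∧
      q.1 = b.1 + (b.2.map Prod.fst).sum)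
    (fun q hq => by
      obtain ⟨ts, p, h1, h2, h3⟩ := hblk q hq
      exact ⟨(ts, p), h1, h2, h3⟩)
  refine ⟨(P1.map (fun x => x.2.1)).sum, (P1.map (fun (x : (Multiset X × X) × Multiset X × Multiset (Multiset X × X)) => x.2.2)).sum, ?_, ?_, ?_⟩
  · have hb := GenRel.btrans (gen := aboveGen r es)
      (P1.map (fun x => (x.2.1 + x.2.2.map Prod.snd, x.1.2))) f ?_ ?_
    · have heq : ((P1.map (fun x => (x.2.1 + x.2.2.map Prod.snd, x.1.2))).map
          Prod.fst).sum
          = (P1.map (fun x => x.2.1)).sum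
            + ((P1.map (fun (x : (Multiset X × X) × Multiset X × Multiset (Multiset X × X)) => x.2.2)).sum).map Prod.snd := by
        rw [Multiset.map_map, msum_map, Multiset.map_map]
        show (P1.map (fun x => x.2.1 + x.2.2.map Prod.snd)).sum = _
        rw [Multiset.sum_map_add]
        rfl
      rwa [heq] at hb
    · have heq : (P1.map (fun x => (x.2.1 + x.2.2.map Prod.snd, x.1.2))).map
          Prod.snd = P0.map Prod.snd := by
        rw [Multiset.map_map, ← hP1, Multiset.map_map]
        rfl
      rwa [heq]
    · intro q hq
      obtain ⟨x, hx, rfl⟩ := Multiset.mem_map.mp hq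
      exact (hP2 x hx).1
  · intro q hq
    obtain ⟨s, hs, hq'⟩ := mmem_sum hq
    obtain ⟨x, hx, rfl⟩ := Multiset.mem_map.mp hs
    exact (hP2 x hx).2.1 q hq'
  · calc (P0.map Prod.fst).sum
        = ((P1.map Prod.fst).map Prod.fst).sum := by rw [hP1]
      _ = (P1.map (fun x => x.1.1)).sum := by rw [Multiset.map_map]; rfl
      _ = (P1.map (fun x => x.2.1 + (x.2.2.map Prod.fst).sum)).sum := by
          rw [Multiset.map_congr rfl (fun x hx => (hP2 x hx).2.2)]
      _ = (P1.map (fun x => x.2.1)).sum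
          + (P1.map (fun x => (x.2.2.map Prod.fst).sum)).sum := by
          rw [Multiset.sum_map_add]
      _ = (P1.map (fun x => x.2.1)).sum
          + (((P1.map (fun (x : (Multiset X × X) × Multiset X × Multiset (Multiset X × X)) => x.2.2)).sum).map Prod.fst).sum := by
          congr 1
          rw [msum_map, Multiset.map_map, msum_sum, Multiset.map_map]
          rfl

/-- Relations with head not below `es` decompose as graftings. -/
lemma DD_of_rel (ht : IsTree r) :
    ∀ (n : ℕ) (f : X) (fs : Multiset X), meas r f < n →
      (∀ g ∈ es, ¬ descends r f g) → r fs f → DD r es fs f := by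
  intro n
  induction n with
  | zero => intro f fs h; omega
  | succ n ih =>
    intro f fs hm hU' hfs
    by_cases hne : fs = ({f} : Multiset X)
    · refine ⟨{f}, 0, ?_, by simp, by simp [hne]⟩
      show rAbove r es ({f} + (0 : Multiset (Multiset X × X)).map Prod.snd) f
      simpa [rAbove] using GenRel.refl (gen := aboveGen r es) f
    have hnl : ¬ IsLeaf r f := fun hl => hl ⟨fs, hfs, hne⟩
    obtain ⟨gs, hup⟩ := ht.upTuple_of_not_leaf hnl
    obtain ⟨p0, hsnd, hfst, hblk⟩ := hup.2 fs hfs hne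
    have hconds : ∀ g ∈ es, ¬ sdescends r f g ∧ f ≠ g := by
      intro g hg
      exact ⟨fun hd => hU' g hg hd.1, fun h => hU' g hg (h ▸ ht.desc_refl f)⟩
    have htop : rAbove r es (p0.map Prod.snd) f := by
      rw [hsnd]; exact GenRel.of _ _ ⟨hup, hconds⟩
    have hblks : ∀ q ∈ p0, DD r es q.1 q.2 := by
      intro q hq
      have hq2 : q.2 ∈ gs := by
        rw [← hsnd]; exact Multiset.mem_map_of_mem Prod.snd hq
      have hsdq := ht.up_sdesc hup hq2
      by_cases hes : q.2 ∈ es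
      · refine ⟨0, {(q.1, q.2)}, ?_, ?_, by simp⟩
        · show rAbove r es (0 + ({(q.1, q.2)} : Multiset (Multiset X × X)).map
            Prod.snd) q.2
          simpa [rAbove] using GenRel.refl (gen := aboveGen r es) q.2
        · intro q' hq'
          rw [Multiset.mem_singleton.mp hq']
          exact ⟨hes, (rBelow_iff ht (ht.desc_refl q.2) q.1).mpr (hblk q hq)⟩
      · have hUq : ∀ g ∈ es, ¬ sdescends r q.2 g :=
          up_mem_U ht hU' hup q.2 hq2
        have hlt : meas r q.2 < n := by
          have := ht.meas_lt hsdq; omega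
        exact ih q.2 q.1 hlt (U'_of_U_notmem hUq hes) (hblk q hq)
    have := DD_btrans p0 f htop hblks
    rwa [hfst] at this

end Assemble

/-- `T^{≤e}` and `T_{≮e̲}` are trees, and `T` is (identically
on underlying sets) the grafting `T_{≮e̲} ⨿_{e̲} (T^{≤e₁} ⨿ ⋯ ⨿ T^{≤eₙ})`,
whose relations are relations of `T_{≮e̲}`, relations of some `T^{≤eᵢ}`, and
composites thereof. -/
theorem stmt6 {X : Type u} (r : Rel X) (ht : IsTree r) (e : X)
    (es : Multiset X) (hinc : es.Pairwise (Incomp r)) :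
    IsTree (fun (fs : Multiset {f : X // descends r f e})
        (f : {f : X // descends r f e}) =>
      rBelow r e (fs.map Subtype.val) f.val) ∧
    IsTree (fun (fs : Multiset {f : X // ∀ g ∈ es, ¬ sdescends r f g})
        (f : {f : X // ∀ g ∈ es, ¬ sdescends r f g}) =>
      rAbove r es (fs.map Subtype.val) f.val) ∧
    (∀ fs f, r fs f ↔
      (rAbove r es fs f ∨ (∃ g ∈ es, rBelow r g fs f) ∨
        ∃ (ts : Multiset X) (p : Multiset (Multiset X × X)),
          rAbove r es (ts + p.map Prod.snd) f ∧
          (∀ q ∈ p, q.2 ∈ es ∧ rBelow r q.2 q.1 q.2) ∧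
          fs = ts + (p.map Prod.fst).sum)) := by
  classical
  refine ⟨below_isTree ht e, above_isTree ht, ?_⟩
  intro fs f
  constructor
  · intro hr
    by_cases hc : ∃ g ∈ es, descends r f g
    · obtain ⟨g, hg, hfg⟩ := hc
      exact Or.inr (Or.inl ⟨g, hg, (rBelow_iff ht hfg fs).mpr hr⟩)
    · push_neg at hc
      obtain ⟨ts, p, h1, h2, h3⟩ :=
        DD_of_rel ht (meas r f + 1) f fs (by omega) hc hr
      exact Or.inr (Or.inr ⟨ts, p, h1, h2, h3⟩)
  · rintro (h | ⟨g, hg, h⟩ | ⟨ts, p, h1, h2, h3⟩)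
    · exact rAbove_sub ht h
    · exact rBelow_sub ht h
    · subst h3
      have hb := ht.btr (ts.map (fun y => (({y} : Multiset X), y)) + p) f ?_ ?_
      · have heq : (((ts.map (fun y => (({y} : Multiset X), y)) + p).map
            Prod.fst)).sum = ts + (p.map Prod.fst).sum := by
          rw [Multiset.map_add, Multiset.map_map, Multiset.sum_add]
          congr 1
          exact Multiset.sum_map_singleton ts
        rwa [heq] at hb
      · have heq : ((ts.map (fun y => (({y} : Multiset X), y)) + p).map
            Prod.snd) = ts + p.map Prod.snd := by
          rw [Multiset.map_add, Multiset.map_map]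
          congr 1
          show ts.map id = ts
          exact Multiset.map_id ts
        rw [heq]
        exact rAbove_sub ht h1
      · intro q hq
        rcases Multiset.mem_add.mp hq with hq | hq
        · obtain ⟨y, _, rfl⟩ := Multiset.mem_map.mp hq
          exact ht.rfl' y
        · exact rBelow_sub ht (h2 q hq).2

end BroadPaper
end

section
/- Let T be a tree with root r, and let e̲ = e_1⋯e_n be a tuple of pairwise ≤_d-incomparable edges of T. Then there exists a tuple f̲ such that e̲ f̲ ≤ r is a broad relation in T. Consequently, if e, f ∈ T are ≤_d-incomparable and e' ≤_d e, then e' and f are ≤_d-incomparable. -/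
universe u

namespace BroadPaper


section Aux
variable {X : Type u} {r : Rel X} [DecidableEq X]

omit [DecidableEq X] in
lemma mem_msum {s : Multiset (Multiset X)} {a : X} (h : a ∈ s.sum) : ∃ t ∈ s, a ∈ t := by
  induction s using Multiset.induction with
  | empty => simp at h
  | cons b t ih =>
    simp only [Multiset.sum_cons, Multiset.mem_add] at h
    rcases h with h | h
    · exact ⟨b, Multiset.mem_cons_self _ _, h⟩
    · obtain ⟨u, hu, ha⟩ := ih h
      exact ⟨u, Multiset.mem_cons_of_mem hu, ha⟩

lemma subst_rel (hpb : IsPreBroad r) {gs ks : Multiset X} {x b : X}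
    (hgs : r gs x) (hb : b ∈ gs) (hks : r ks b) : r (gs.erase b + ks) x := by
  obtain ⟨hrefl, hbt⟩ := hpb
  have h := hbt ((ks, b) ::ₘ (gs.erase b).map (fun g => (({g} : Multiset X), g))) x ?_ ?_
  · simpa [Multiset.map_cons, Multiset.map_map, Multiset.sum_cons,
      Multiset.sum_map_singleton, add_comm] using h
  · simpa [Multiset.map_cons, Multiset.map_map, Multiset.cons_erase hb] using hgs
  · intro q hq
    rcases Multiset.mem_cons.mp hq with h1 | h1
    · subst h1; exact hks
    · obtain ⟨g, hg, rfl⟩ := Multiset.mem_map.mp h1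
      exact hrefl g

omit [DecidableEq X] in
lemma descends_refl (hpb : IsPreBroad r) (e : X) : descends r e e :=
  ⟨{e}, hpb.1 e, Multiset.mem_singleton_self e⟩

lemma descends_trans_s7 (hpb : IsPreBroad r) {a b c : X}
    (hab : descends r a b) (hbc : descends r b c) : descends r a c := by
  obtain ⟨ks, hks, ha⟩ := hab
  obtain ⟨gs, hgs, hb⟩ := hbc
  exact ⟨gs.erase b + ks, subst_rel hpb hgs hb hks, Multiset.mem_add.mpr (Or.inr ha)⟩

lemma no_strict_self (hpb : IsPreBroad r) (hs : Simple r) {hsx : Multiset X} {x : X}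
    (h : r hsx x) (hx : x ∈ hsx) (hne : hsx ≠ {x}) : False := by
  have h2 := subst_rel hpb h hx h
  have hnd := hs _ _ h2
  have h0 : hsx.erase x ≠ 0 := by
    intro h0
    apply hne
    have h1 := Multiset.cons_erase hx
    rw [h0] at h1
    simpa using h1.symm
  obtain ⟨c, hc⟩ := Multiset.exists_mem_of_ne_zero h0
  have hc2 : c ∈ hsx := Multiset.mem_of_mem_erase hc
  have hcount : 2 ≤ (hsx.erase x + hsx).count c := by
    rw [Multiset.count_add]
    have t1 := Multiset.count_pos.mpr hc
    have t2 := Multiset.count_pos.mpr hc2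
    omega
  have := Multiset.nodup_iff_count_le_one.mp hnd c
  omega

lemma no_desc_mem (hpb : IsPreBroad r) (hs : Simple r) {gs : Multiset X} {x a b : X}
    (hgs : r gs x) (ha : a ∈ gs) (hb : b ∈ gs) (hne : a ≠ b) : ¬ descends r a b := by
  rintro ⟨ks, hks, hak⟩
  have h2 := subst_rel hpb hgs hb hks
  have hnd := hs _ _ h2
  have ha' : a ∈ gs.erase b := (Multiset.mem_erase_of_ne hne).mpr ha
  have hcount : 2 ≤ (gs.erase b + ks).count a := by
    rw [Multiset.count_add]
    have t1 := Multiset.count_pos.mpr ha'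
    have t2 := Multiset.count_pos.mpr hak
    omega
  have := Multiset.nodup_iff_count_le_one.mp hnd a
  omega

lemma descends_antisymm_s7 (hb : IsBroad r) (hs : Simple r) {a b : X}
    (hab : descends r a b) (hba : descends r b a) : a = b := by
  by_contra hne
  obtain ⟨gs, hgs, hag⟩ := hab
  obtain ⟨ks, hks, hbk⟩ := hba
  have h2 := subst_rel hb.1 hgs hag hks
  have hbm : b ∈ gs.erase a + ks := Multiset.mem_add.mpr (Or.inr hbk)
  by_cases hcase : gs.erase a + ks = {b}
  · have hca : Multiset.card (gs.erase a + ks) = 1 := by rw [hcase]; simp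
    rw [Multiset.card_add] at hca
    have hk1 : 1 ≤ Multiset.card ks := Multiset.card_pos_iff_exists_mem.mpr ⟨b, hbk⟩
    have he0 : Multiset.card (gs.erase a) = 0 := by omega
    have he0' : gs.erase a = 0 := Multiset.card_eq_zero.mp he0
    have hgs1 : gs = {a} := by
      have h1 := Multiset.cons_erase hag
      rw [he0'] at h1
      simpa using h1.symm
    have hks1 : ks = {b} := by
      rw [he0'] at hcase
      simpa using hcase
    rw [hgs1] at hgs
    rw [hks1] at hks
    exact hne (hb.2 a b hgs hks)
  · exact no_strict_self hb.1 hs h2 hbm hcase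

lemma desc_unique (hpb : IsPreBroad r) (hs : Simple r) {gs : Multiset X} {x a u u' : X}
    (hgs : r gs x) (hu : u ∈ gs) (hu' : u' ∈ gs) (hne : u ≠ u')
    (hau : descends r a u) (hau' : descends r a u') : False := by
  by_cases hae : a = u'
  · subst hae
    exact no_desc_mem hpb hs hgs hu' hu (Ne.symm hne) hau
  · obtain ⟨ks, hks, hak⟩ := hau
    have h2 := subst_rel hpb hgs hu hks
    have hu'm : u' ∈ gs.erase u + ks :=
      Multiset.mem_add.mpr (Or.inl ((Multiset.mem_erase_of_ne (Ne.symm hne)).mpr hu'))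
    have ham : a ∈ gs.erase u + ks := Multiset.mem_add.mpr (Or.inr hak)
    exact no_desc_mem hpb hs h2 ham hu'm hae hau'

lemma sum_map_ite (us : Multiset X) (x : X) (c : ℕ) :
    (us.map fun u => if x = u then c else 0).sum = us.count x * c := by
  induction us using Multiset.induction with
  | empty => simp
  | cons u t ih =>
    simp only [Multiset.map_cons, Multiset.sum_cons, ih, Multiset.count_cons]
    split_ifs <;> ring

lemma count_sum_map {α : Type u} (s : Multiset α) (g : α → Multiset X) (b : X) :
    ((s.map g).sum).count b = (s.map fun a => (g a).count b).sum := by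
  induction s using Multiset.induction with
  | empty => simp
  | cons x t ih => simp [ih]

omit [DecidableEq X] in
lemma pairwise_of_forall {R : X → X → Prop} {m : Multiset X} (hnd : m.Nodup)
    (h : ∀ a ∈ m, ∀ b ∈ m, a ≠ b → R a b) : m.Pairwise R := by
  obtain ⟨l, hl⟩ := Quotient.exists_rep m
  subst hl
  refine ⟨l, rfl, ?_⟩
  have hnd' : l.Nodup := hnd
  exact List.Pairwise.imp_of_mem (fun {a b} ha hb hne => h a ha b hb hne) hnd'

omit [DecidableEq X] in
lemma forall_of_pairwise {R : X → X → Prop} (hsym : Symmetric R) {m : Multiset X}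
    (h : m.Pairwise R) : ∀ a ∈ m, ∀ b ∈ m, a ≠ b → R a b := by
  obtain ⟨l, rfl, hl⟩ := h
  intro a ha b hb hne
  haveI : Std.Symm R := ⟨fun a b h => hsym h⟩
  exact hl.forall (by simpa using ha) (by simpa using hb) hne

omit [DecidableEq X] in
lemma nodup_of_pairwise_incomp (hpb : IsPreBroad r) {m : Multiset X}
    (h : m.Pairwise (Incomp r)) : m.Nodup := by
  obtain ⟨l, rfl, hl⟩ := h
  have : l.Pairwise (· ≠ ·) := by
    refine List.Pairwise.imp ?_ hl
    intro a b hab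
    rintro rfl
    exact hab.1 (descends_refl hpb a)
  exact Multiset.coe_nodup.mpr this

lemma complete (ht : IsTree r) :
    ∀ e : X, ∀ es : Multiset X, es.Pairwise (Incomp r) →
      (∀ x ∈ es, descends r x e) → ∃ fs, r (es + fs) e := by
  obtain ⟨hb, hfin, hsimp, hln, -⟩ := ht
  have hpb : IsPreBroad r := hb.1
  obtain ⟨hrefl, hbt⟩ := hb.1
  have hwf : WellFounded (fun a b => descends r a b ∧ a ≠ b) := by
    have htr : Transitive (fun a b => descends r a b ∧ a ≠ b) := by
      rintro a b c ⟨hab, hne1⟩ ⟨hbc, hne2⟩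
      refine ⟨descends_trans_s7 hpb hab hbc, ?_⟩
      rintro rfl
      exact hne2 (descends_antisymm_s7 hb hsimp hbc hab)
    have hir : Irreflexive (fun a b => descends r a b ∧ a ≠ b) := by
      rintro a ⟨-, hne⟩; exact hne rfl
    have : IsTrans X (fun a b => descends r a b ∧ a ≠ b) := ⟨htr⟩
    have : IsIrrefl X (fun a b => descends r a b ∧ a ≠ b) := ⟨hir⟩
    exact Finite.wellFounded_of_trans_of_irrefl _
  refine fun e => hwf.induction (C := fun e => ∀ es : Multiset X,
    es.Pairwise (Incomp r) → (∀ x ∈ es, descends r x e) → ∃ fs, r (es + fs) e)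
    e (fun e IH => ?_)
  intro es hinc hdes
  have hIncSym : Symmetric (Incomp r) := fun a b h => ⟨h.2, h.1⟩
  have hnd : es.Nodup := nodup_of_pairwise_incomp hpb hinc
  have hpair : ∀ a ∈ es, ∀ b ∈ es, a ≠ b → Incomp r a b := forall_of_pairwise hIncSym hinc
  by_cases hes0 : es = 0
  · subst hes0
    exact ⟨{e}, by simpa using hrefl e⟩
  by_cases hee : e ∈ es
  · have hese : es = {e} := by
      have h1 : es.erase e = 0 := by
        by_contra h0
        obtain ⟨b, hbm⟩ := Multiset.exists_mem_of_ne_zero h0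
        have hbe : b ∈ es := Multiset.mem_of_mem_erase hbm
        by_cases hbeq : b = e
        · subst hbeq
          exact hnd.notMem_erase hbm
        · exact (hpair b hbe e hee hbeq).1 (hdes b hbe)
      have h2 := Multiset.cons_erase hee
      rw [h1] at h2
      simpa using h2.symm
    rw [hese]
    exact ⟨0, by simpa using hrefl e⟩
  -- e ∉ es, es ≠ 0
  obtain ⟨a0, ha0⟩ := Multiset.exists_mem_of_ne_zero hes0
  obtain ⟨gs0, hgs0, ha0g⟩ := hdes a0 ha0
  have hnotleaf : ¬ IsLeaf r e := by
    intro hl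
    refine hl ⟨gs0, hgs0, ?_⟩
    intro h
    rw [h] at ha0g
    rw [Multiset.mem_singleton.mp ha0g] at ha0
    exact hee ha0
  obtain ⟨us, ⟨hus, husne⟩, hmax⟩ := (hln e).resolve_left hnotleaf
  have heus : e ∉ us := fun hm => no_strict_self hpb hsimp hus hm husne
  have husnd : us.Nodup := hsimp _ _ hus
  have hparent : ∀ a ∈ es, ∃ u ∈ us, descends r a u := by
    intro a ha
    obtain ⟨gs, hgs, hag⟩ := hdes a ha
    have hgsne : gs ≠ ({e} : Multiset X) := by
      intro h
      rw [h] at hag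
      rw [Multiset.mem_singleton.mp hag] at ha
      exact hee ha
    obtain ⟨p, hsnd, hfst, hblk⟩ := hmax gs hgs hgsne
    have hmem : a ∈ (p.map Prod.fst).sum := by rw [hfst]; exact hag
    obtain ⟨t, htp, hat⟩ := mem_msum hmem
    obtain ⟨q, hqp, rfl⟩ := Multiset.mem_map.mp htp
    refine ⟨q.2, ?_, ⟨q.1, hblk q hqp, hat⟩⟩
    rw [← hsnd]
    exact Multiset.mem_map_of_mem _ hqp
  have hchoice : ∀ a : X, ∃ u : X, a ∈ es → (u ∈ us ∧ descends r a u) := by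
    intro a
    by_cases ha : a ∈ es
    · obtain ⟨u, hu, hd⟩ := hparent a ha
      exact ⟨u, fun _ => ⟨hu, hd⟩⟩
    · exact ⟨e, fun h => absurd h ha⟩
  choose σ hσ using hchoice
  have hIHall : ∀ u : X, ∃ fs, u ∈ us → r (es.filter (fun a => σ a = u) + fs) u := by
    intro u
    by_cases hu : u ∈ us
    · have hdu : descends r u e ∧ u ≠ e :=
        ⟨⟨us, hus, hu⟩, fun h => heus (h ▸ hu)⟩
      have hsub : es.filter (fun a => σ a = u) ≤ es := Multiset.filter_le _ _
      have hp : (es.filter (fun a => σ a = u)).Pairwise (Incomp r) :=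
        pairwise_of_forall (hnd.filter _)
          (fun a ha b hb3 hne => hpair a (Multiset.mem_of_le hsub ha) b
            (Multiset.mem_of_le hsub hb3) hne)
      have hd : ∀ x ∈ es.filter (fun a => σ a = u), descends r x u := by
        intro x hx
        obtain ⟨hxe, hxu⟩ := Multiset.mem_filter.mp hx
        have := (hσ x hxe).2
        rwa [hxu] at this
      obtain ⟨fs, hfs⟩ := IH u hdu _ hp hd
      exact ⟨fs, fun _ => hfs⟩
    · exact ⟨0, fun h => absurd h hu⟩
  choose f hf using hIHall
  set p : Multiset (Multiset X × X) :=
    us.map (fun u => (es.filter (fun a => σ a = u) + f u, u)) with hpdef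
  have hsnd : p.map Prod.snd = us := by
    simp [hpdef, Multiset.map_map]
  have hall : ∀ q ∈ p, r q.1 q.2 := by
    intro q hq
    rw [hpdef] at hq
    obtain ⟨u, hu, rfl⟩ := Multiset.mem_map.mp hq
    exact hf u hu
  have hcon := hbt p e (by rw [hsnd]; exact hus) hall
  have hfst : (p.map Prod.fst).sum = es + (us.map f).sum := by
    rw [hpdef, Multiset.map_map]
    have heq : (Prod.fst ∘ fun u => (Multiset.filter (fun a => σ a = u) es + f u, u))
        = fun u => Multiset.filter (fun a => σ a = u) es + f u := rfl
    rw [heq, Multiset.sum_map_add]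
    congr 1
    ext a
    rw [count_sum_map]
    have hcf : (us.map fun u => (Multiset.filter (fun x => σ x = u) es).count a)
        = us.map fun u => if σ a = u then es.count a else 0 := by
      apply Multiset.map_congr rfl
      intro u hu
      rw [Multiset.count_filter]
    rw [hcf, sum_map_ite]
    by_cases ha : a ∈ es
    · have hσa : σ a ∈ us := (hσ a ha).1
      rw [Multiset.count_eq_one_of_mem husnd hσa, one_mul]
    · have : es.count a = 0 := Multiset.count_eq_zero.mpr ha
      rw [this, mul_zero]
  refine ⟨(us.map f).sum, ?_⟩
  rwa [hfst] at hcon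

end Aux

/-- In a tree with root `rt`, any tuple of pairwise
`≤_d`-incomparable edges `e̲` can be completed to a broad relation
`e̲ f̲ ≤ rt`; consequently incomparability is inherited by descendants. -/
theorem stmt7 {X : Type u} (r : Rel X) (ht : IsTree r) (rt : X)
    (hrt : ∀ e, descends r e rt)
    (es : Multiset X) (hinc : es.Pairwise (Incomp r)) :
    (∃ fs, r (es + fs) rt) ∧
    (∀ e f e', Incomp r e f → descends r e' e → Incomp r e' f) := by
  classical
  have hpb : IsPreBroad r := ht.1.1
  have hsimp : Simple r := ht.2.2.1
  constructor
  · exact complete ht rt es hinc (fun x _ => hrt x)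
  · intro e f e' hef hde
    obtain ⟨hnef, hnfe⟩ := hef
    constructor
    · intro hd
      have hne : e ≠ f := by
        rintro rfl
        exact hnef (descends_refl hpb e)
      have hpair2 : ({e, f} : Multiset X).Pairwise (Incomp r) := by
        refine ⟨[e, f], rfl, ?_⟩
        exact List.Pairwise.cons
          (fun b hb => by rw [List.mem_singleton.mp hb]; exact ⟨hnef, hnfe⟩)
          (List.pairwise_singleton _ _)
      obtain ⟨fs, hfs⟩ := complete ht rt {e, f} hpair2 (fun x _ => hrt x)
      have hem : e ∈ ({e, f} : Multiset X) + fs := by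
        refine Multiset.mem_add.mpr (Or.inl ?_)
        simp
      have hfm : f ∈ ({e, f} : Multiset X) + fs := by
        refine Multiset.mem_add.mpr (Or.inl ?_)
        simp
      obtain ⟨ks, hks, he'⟩ := hde
      have h2 := subst_rel hpb hfs hem hks
      have hfm2 : f ∈ (({e, f} : Multiset X) + fs).erase e + ks :=
        Multiset.mem_add.mpr (Or.inl ((Multiset.mem_erase_of_ne (Ne.symm hne)).mpr hfm))
      have he'm : e' ∈ (({e, f} : Multiset X) + fs).erase e + ks :=
        Multiset.mem_add.mpr (Or.inr he')
      by_cases h3 : e' = f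
      · subst h3
        exact hnfe ⟨ks, hks, he'⟩
      · exact no_desc_mem hpb hsimp h2 he'm hfm2 h3 hd
    · intro hd
      exact hnfe (descends_trans_s7 hpb hd hde)

end BroadPaper
end
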